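/- arXiv:1510.05620 — 4 statements merged into one kernel-verified Lean document; each statement's English description precedes it below -/
import Mathlib

section
/- Let Φ : ℝ₊ → ℝ₊ be locally integrable and g : ℝ₊ → ℝ₊ be locally bounded. If u : ℝ₊ → ℝ₊ is locally bounded and satisfies u(t) ≤ g(t) + ∫₀ᵗ Φ(t−s) u(s) ds for all t ≥ 0, then for every T > 0 there exists a constant C_T (depending only on T and Φ, and which may be chosen nondecreasing in T) such that sup_{t∈[0,T]} u(t) ≤ C_T · sup_{t∈[0,T]} g(t). -/
open MeasureTheory Set

private lemma refl_indicator (f : ℝ → ℝ) (t : ℝ) :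
    (Ioc 0 t).indicator (fun s => f (t - s)) = fun s => (Ico 0 t).indicator f (t - s) := by
  funext s
  simp only [Set.indicator, mem_Ioc, mem_Ico]
  by_cases h : 0 < s ∧ s ≤ t
  · rw [if_pos h, if_pos ⟨by linarith [h.2], by linarith [h.1]⟩]
  · rw [if_neg h, if_neg]
    rintro ⟨h1, h2⟩
    exact h ⟨by linarith, by linarith⟩

private lemma refl_integral (f : ℝ → ℝ) (t : ℝ) :
    ∫ s in Ioc 0 t, f (t - s) = ∫ s in Ioc 0 t, f s := by
  rw [← integral_indicator measurableSet_Ioc, refl_indicator,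
      integral_sub_left_eq_self ((Ico 0 t).indicator f) volume t,
      integral_indicator measurableSet_Ico]
  exact setIntegral_congr_set Ico_ae_eq_Ioc

private lemma refl_integrableOn {f : ℝ → ℝ} {t : ℝ} (hf : IntegrableOn f (Ico 0 t)) :
    IntegrableOn (fun s => f (t - s)) (Ioc 0 t) := by
  rw [← integrable_indicator_iff measurableSet_Ioc, refl_indicator]
  exact (integrable_comp_sub_left ((Ico 0 t).indicator f) t).2
    ((integrable_indicator_iff measurableSet_Ico).2 hf)

/-- generalized Grönwall lemma. If `Φ : [0,∞) → [0,∞)` is locally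
integrable, `g : [0,∞) → [0,∞)` is locally bounded, and the locally bounded nonnegative
function `u` satisfies `u t ≤ g t + ∫₀ᵗ Φ(t-s) u s ds` for all `t ≥ 0`, then there is a
nondecreasing constant function `T ↦ C T`, depending only on `T` and `Φ`, with
`sup_{[0,T]} u ≤ C T * sup_{[0,T]} g`. -/
theorem stmt1 (Φ : ℝ → ℝ) (hΦnn : ∀ t ≥ 0, 0 ≤ Φ t)
    (hΦ : LocallyIntegrableOn Φ (Ici 0)) :
    ∃ C : ℝ → ℝ, MonotoneOn C (Ioi 0) ∧
      ∀ g u : ℝ → ℝ,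
        (∀ t ≥ 0, 0 ≤ g t) → (∀ T > 0, ∃ B, ∀ t ∈ Icc 0 T, g t ≤ B) →
        (∀ t ≥ 0, 0 ≤ u t) → (∀ T > 0, ∃ B, ∀ t ∈ Icc 0 T, u t ≤ B) →
        (∀ t ≥ 0, u t ≤ g t + ∫ s in Ioc 0 t, Φ (t - s) * u s) →
        ∀ T > 0, ∀ t ∈ Icc 0 T, u t ≤ C T * sSup (g '' Icc 0 T) := by
  classical
  -- integrability of Φ on compact pieces
  have hΦint : ∀ T : ℝ, IntegrableOn Φ (Ioc 0 T) := by
    intro T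
    exact (hΦ.integrableOn_compact_subset (Icc_subset_Ici_self) isCompact_Icc).mono_set
      Ioc_subset_Icc_self
  -- the weighted kernel
  set w : ℝ → ℝ → ℝ := fun l τ => Real.exp (-l * τ) * Φ τ with hw
  have hwint : ∀ l ≥ (0:ℝ), ∀ T : ℝ, IntegrableOn (w l) (Ioc 0 T) := by
    intro l hl T
    refine (hΦint T).bdd_mul (c := 1) ((Real.continuous_exp.comp (continuous_const.mul
      continuous_id)).aestronglyMeasurable) ?_
    refine ae_restrict_of_forall_mem measurableSet_Ioc fun τ hτ => ?_
    rw [Real.norm_eq_abs, abs_of_pos (Real.exp_pos _), Real.exp_le_one_iff]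
    have : (0:ℝ) < τ := hτ.1
    nlinarith
  -- the admissible set of exponents
  set S : ℝ → Set ℝ := fun T => {l : ℝ | 0 ≤ l ∧ ∫ τ in Ioc 0 T, w l τ ≤ 1/2} with hS
  have hSne : ∀ T : ℝ, (S T).Nonempty := by
    intro T
    have hlim : Filter.Tendsto (fun l : ℝ => ∫ τ in Ioc 0 T, w l τ) Filter.atTop (nhds 0) := by
      have h00 : (∫ τ in Ioc (0:ℝ) T, (0:ℝ)) = 0 := by simp
      have hlim0 : Filter.Tendsto (fun l : ℝ => ∫ τ in Ioc 0 T, w l τ) Filter.atTop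
          (nhds (∫ τ in Ioc (0:ℝ) T, (0:ℝ))) := by
        apply tendsto_integral_filter_of_dominated_convergence Φ
        · filter_upwards with l
          exact ((Real.continuous_exp.comp (continuous_const.mul
            continuous_id)).aestronglyMeasurable).mul (hΦint T).1
        · filter_upwards [Filter.eventually_ge_atTop (0:ℝ)] with l hl
          refine ae_restrict_of_forall_mem measurableSet_Ioc fun τ hτ => ?_
          have h1 : (0:ℝ) < τ := hτ.1
          have h2 : Real.exp (-l * τ) ≤ 1 := by
            rw [Real.exp_le_one_iff]; nlinarith
          have h3 : 0 ≤ Φ τ := hΦnn τ (le_of_lt h1)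
          simp only [hw]
          rw [Real.norm_eq_abs, abs_of_nonneg (by positivity)]
          nlinarith [Real.exp_pos (-l * τ)]
        · exact hΦint T
        · refine ae_restrict_of_forall_mem measurableSet_Ioc fun τ hτ => ?_
          have h1 : (0:ℝ) < τ := hτ.1
          have hneg : Filter.Tendsto (fun l : ℝ => -l * τ) Filter.atTop Filter.atBot := by
            simp only [neg_mul]
            exact Filter.tendsto_neg_atBot_iff.2 (Filter.tendsto_id.atTop_mul_const h1)
          have hexp := Real.tendsto_exp_atBot.comp hneg
          simp only [hw]
          simpa [Function.comp] using hexp.mul_const (Φ τ)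
      simpa using hlim0
    have := hlim.eventually_le_const (by norm_num : (0:ℝ) < 1/2)
    rcases (this.and (Filter.eventually_ge_atTop (0:ℝ))).exists with ⟨l, hl1, hl2⟩
    exact ⟨l, hl2, hl1⟩
  have hSbdd : ∀ T : ℝ, BddBelow (S T) := fun T => ⟨0, fun l hl => hl.1⟩
  set lam : ℝ → ℝ := fun T => sInf (S T) + 1 with hlam
  have hlam_nonneg : ∀ T, 0 ≤ lam T := by
    intro T
    have h : (0:ℝ) ≤ sInf (S T) := le_csInf (hSne T) fun l hl => hl.1
    show (0:ℝ) ≤ sInf (S T) + 1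
    linarith
  -- lam T is admissible
  have hlam_mem : ∀ T : ℝ, ∫ τ in Ioc 0 T, w (lam T) τ ≤ 1/2 := by
    intro T
    obtain ⟨l, hlS, hll⟩ := exists_lt_of_csInf_lt (hSne T)
      (show sInf (S T) < lam T from by show sInf (S T) < sInf (S T) + 1; linarith)
    refine le_trans ?_ hlS.2
    refine setIntegral_mono_on ((hwint _ (hlam_nonneg T) T)) ((hwint _ hlS.1 T))
      measurableSet_Ioc fun τ hτ => ?_
    have h1 : (0:ℝ) < τ := hτ.1
    have h3 : 0 ≤ Φ τ := hΦnn τ (le_of_lt h1)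
    have : Real.exp (-lam T * τ) ≤ Real.exp (-l * τ) := by
      apply Real.exp_le_exp.2; nlinarith [le_of_lt hll]
    exact mul_le_mul_of_nonneg_right this h3
  -- the constant
  refine ⟨fun T => 2 * Real.exp (lam T * T), ?_, ?_⟩
  · -- monotonicity
    intro T1 hT1 T2 hT2 hT
    have hlam_mono : lam T1 ≤ lam T2 := by
      have hsub : S T2 ⊆ S T1 := by
        rintro l ⟨hl0, hl⟩
        refine ⟨hl0, le_trans ?_ hl⟩
        refine setIntegral_mono_set (hwint l hl0 T2) ?_ ?_
        · refine ae_restrict_of_forall_mem measurableSet_Ioc fun τ hτ => ?_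
          have h1 : (0:ℝ) < τ := hτ.1
          have h3 : 0 ≤ Φ τ := hΦnn τ (le_of_lt h1)
          positivity
        · exact HasSubset.Subset.eventuallyLE (Ioc_subset_Ioc_right hT)
      have h := csInf_le_csInf (hSbdd T1) (hSne T2) hsub
      show sInf (S T1) + 1 ≤ sInf (S T2) + 1
      linarith
    have h1 : lam T1 * T1 ≤ lam T2 * T2 := by
      have := hlam_nonneg T1
      have : (0:ℝ) < T1 := hT1
      nlinarith [hlam_nonneg T1, hlam_nonneg T2, le_of_lt (show (0:ℝ) < T1 from hT1)]
    have h2 := Real.exp_le_exp.2 h1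
    show 2 * Real.exp (lam T1 * T1) ≤ 2 * Real.exp (lam T2 * T2)
    linarith
  · -- main estimate
    intro g u hgnn hgB hunn huB hineq T hT t ht
    set G := sSup (g '' Icc 0 T) with hG
    set l := lam T with hl
    set v : ℝ → ℝ := fun s => Real.exp (-l * s) * u s with hv
    set V := sSup (v '' Icc 0 T) with hV
    have hTnn : (0:ℝ) ≤ T := le_of_lt hT
    have hne : (Icc 0 T).Nonempty := ⟨0, by simp [hTnn]⟩
    have hlnn : 0 ≤ l := hlam_nonneg T
    -- bounds for sSup
    obtain ⟨Bu, hBu⟩ := huB T hT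
    obtain ⟨Bg, hBg⟩ := hgB T hT
    have hvle : ∀ s ∈ Icc 0 T, v s ≤ u s := by
      intro s hs
      have h2 : Real.exp (-l * s) ≤ 1 := by
        rw [Real.exp_le_one_iff]; nlinarith [hs.1]
      show Real.exp (-l * s) * u s ≤ u s
      nlinarith [hunn s hs.1, Real.exp_pos (-l * s)]
    have hVbdd : BddAbove (v '' Icc 0 T) := by
      refine ⟨Bu, ?_⟩
      rintro x ⟨s, hs, rfl⟩
      exact le_trans (hvle s hs) (hBu s hs)
    have hGbdd : BddAbove (g '' Icc 0 T) := by
      refine ⟨Bg, ?_⟩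
      rintro x ⟨s, hs, rfl⟩
      exact hBg s hs
    have hv0 : v 0 ≤ V := le_csSup hVbdd ⟨0, by simp [hTnn], rfl⟩
    have hVnn : 0 ≤ V :=
      le_trans (show (0:ℝ) ≤ v 0 from mul_nonneg (Real.exp_pos _).le (hunn 0 le_rfl)) hv0
    have hGnn : 0 ≤ G := by
      have : g 0 ≤ G := le_csSup hGbdd ⟨0, by simp [hTnn], rfl⟩
      exact le_trans (hgnn 0 le_rfl) this
    -- key pointwise claim
    have key : ∀ r ∈ Icc (0:ℝ) T, v r ≤ G + (1/2) * V := by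
      intro r hr
      have hrnn : (0:ℝ) ≤ r := hr.1
      have hwr : IntegrableOn (fun s => w l (r - s)) (Ioc 0 r) := by
        apply refl_integrableOn
        rw [IntegrableOn, Measure.restrict_congr_set Ico_ae_eq_Ioc]
        exact hwint l hlnn r
      have hI : (∫ s in Ioc 0 r, Φ (r - s) * u s) ≤ Real.exp (l * r) * V * (1/2) := by
        have step1 : (∫ s in Ioc 0 r, Φ (r - s) * u s)
            ≤ ∫ s in Ioc 0 r, Real.exp (l * r) * V * w l (r - s) := by
          refine integral_mono_of_nonneg ?_ ((hwr.const_mul _)) ?_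
          · refine ae_restrict_of_forall_mem measurableSet_Ioc fun s hs => ?_
            have h1 : (0:ℝ) ≤ r - s := by linarith [hs.2]
            exact mul_nonneg (hΦnn _ h1) (hunn s (le_of_lt hs.1))
          · refine ae_restrict_of_forall_mem measurableSet_Ioc fun s hs => ?_
            have h1 : (0:ℝ) ≤ r - s := by linarith [hs.2]
            have h2 : v s ≤ V := le_csSup hVbdd ⟨s, ⟨le_of_lt hs.1, le_trans hs.2 hr.2⟩, rfl⟩
            have h3 : u s = Real.exp (l * s) * v s := by
              rw [hv]; simp only []
              rw [← mul_assoc, ← Real.exp_add]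
              ring_nf
              rw [Real.exp_zero, one_mul]
            have h4 : Φ (r - s) * u s ≤ Φ (r - s) * (Real.exp (l * s) * V) := by
              rw [h3]
              exact mul_le_mul_of_nonneg_left
                (mul_le_mul_of_nonneg_left h2 (le_of_lt (Real.exp_pos _))) (hΦnn _ h1)
            refine le_trans h4 (le_of_eq ?_)
            rw [hw]
            simp only []
            rw [show Real.exp (l * r) * V * (Real.exp (-l * (r - s)) * Φ (r - s))
                = Φ (r - s) * ((Real.exp (l * r) * Real.exp (-l * (r - s))) * V) by ring,
              ← Real.exp_add]
            ring_nf
        have step2 : (∫ s in Ioc 0 r, Real.exp (l * r) * V * w l (r - s))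
            = Real.exp (l * r) * V * ∫ s in Ioc 0 r, w l s := by
          rw [integral_const_mul, refl_integral]
        have step3 : (∫ s in Ioc 0 r, w l s) ≤ 1/2 := by
          refine le_trans ?_ (hlam_mem T)
          refine setIntegral_mono_set (hwint l hlnn T) ?_ ?_
          · refine ae_restrict_of_forall_mem measurableSet_Ioc fun τ hτ => ?_
            have h1 : (0:ℝ) < τ := hτ.1
            have h3 : 0 ≤ Φ τ := hΦnn τ (le_of_lt h1)
            rw [hw]; positivity
          · exact HasSubset.Subset.eventuallyLE (Ioc_subset_Ioc_right hr.2)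
        calc (∫ s in Ioc 0 r, Φ (r - s) * u s)
            ≤ Real.exp (l * r) * V * ∫ s in Ioc 0 r, w l s := by rw [← step2]; exact step1
          _ ≤ Real.exp (l * r) * V * (1/2) :=
              mul_le_mul_of_nonneg_left step3 (by positivity)
      have hur := hineq r hrnn
      have hexp1 : Real.exp (-l * r) ≤ 1 := by
        rw [Real.exp_le_one_iff]; nlinarith
      have hgr : g r ≤ G := le_csSup hGbdd ⟨r, hr, rfl⟩
      have : v r ≤ Real.exp (-l * r) * g r + Real.exp (-l * r) * (Real.exp (l * r) * V * (1/2)) := by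
        rw [hv]; simp only []
        have := Real.exp_pos (-l * r)
        nlinarith [hI, hur, Real.exp_pos (-l * r)]
      refine le_trans this ?_
      have he : Real.exp (-l * r) * Real.exp (l * r) = 1 := by
        rw [← Real.exp_add]; ring_nf; exact Real.exp_zero
      have h1 : Real.exp (-l * r) * g r ≤ G := by
        nlinarith [hgnn 0, hgnn r hrnn, Real.exp_pos (-l * r)]
      nlinarith [Real.exp_pos (-l * r)]
    -- conclude V ≤ 2 G
    have hVle : V ≤ G + (1/2) * V := by
      refine csSup_le (hne.image v) ?_
      rintro x ⟨s, hs, rfl⟩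
      exact key s hs
    have hV2G : V ≤ 2 * G := by linarith
    -- final estimate
    have hvt : v t ≤ V := le_csSup hVbdd ⟨t, ht, rfl⟩
    have hut : u t = Real.exp (l * t) * v t := by
      rw [hv]; simp only []
      rw [← mul_assoc, ← Real.exp_add]
      ring_nf
      rw [Real.exp_zero, one_mul]
    have hexp2 : Real.exp (l * t) ≤ Real.exp (l * T) := by
      apply Real.exp_le_exp.2
      nlinarith [ht.2, ht.1]
    calc u t = Real.exp (l * t) * v t := hut
      _ ≤ Real.exp (l * t) * V := mul_le_mul_of_nonneg_left hvt (le_of_lt (Real.exp_pos _))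
      _ ≤ Real.exp (l * T) * V := mul_le_mul_of_nonneg_right hexp2 hVnn
      _ ≤ Real.exp (l * T) * (2 * G) := mul_le_mul_of_nonneg_left hV2G (le_of_lt (Real.exp_pos _))
      _ = 2 * Real.exp (lam T * T) * G := by rw [hl]; ring
end

section
/- Let Ψ₀ : ℝ → ℝ₊ be Lipschitz continuous, h : ℝ₊ → ℝ locally integrable, f₀ : ℝ₊ → ℝ continuous. Then there is a unique continuous function λ̄ : ℝ₊ → ℝ₊ satisfying the convolution fixed-point equation λ̄(t) = Ψ₀(∫₀ᵗ h(t−z) λ̄(z) dz + f₀(t)) for all t ≥ 0. -/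
open MeasureTheory Set Filter Topology

namespace Stmt11Aux


/-- Reflection change of variables. -/
lemma conv_eq (h u : ℝ → ℝ) {t : ℝ} (ht : 0 ≤ t) :
    ∫ z in Ioc 0 t, h (t - z) * u z = ∫ w in Ioc 0 t, h w * u (t - w) := by
  rw [← intervalIntegral.integral_of_le ht, ← intervalIntegral.integral_of_le ht]
  calc ∫ z in (0:ℝ)..t, h (t - z) * u z
      = ∫ z in (0:ℝ)..t, (fun w => h w * u (t - w)) (t - z) := by
        apply intervalIntegral.integral_congr
        intro z _
        simp [sub_sub_cancel]
    _ = ∫ w in (0:ℝ)..t, h w * u (t - w) := by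
        have := intervalIntegral.integral_comp_sub_left (fun w => h w * u (t - w)) t (a := 0) (b := t)
        simpa using this



lemma contOn_reflInt {h : ℝ → ℝ} (hh : LocallyIntegrableOn h (Ici 0)) {u : ℝ → ℝ}
    (hu : Continuous u) :
    ContinuousOn (fun t => ∫ w in Ioc 0 t, h w * u (t - w)) (Ici 0) := by
  intro t₀ ht₀
  set T : ℝ := t₀ + 1 with hTdef
  have ht₀T : t₀ < T := lt_add_one t₀
  have hT0 : (0:ℝ) ≤ T := le_trans ht₀ ht₀T.le
  have hI : IntegrableOn h (Ioc 0 T) :=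
    (hh.integrableOn_compact_subset (fun x hx => hx.1) isCompact_Icc).mono_set
      Ioc_subset_Icc_self
  obtain ⟨M, hM⟩ := (isCompact_Icc (a := -T) (b := T)).exists_bound_of_continuousOn
    hu.continuousOn
  have hM0 : (0:ℝ) ≤ M := le_trans (norm_nonneg (u 0)) (hM 0 ⟨by linarith, hT0⟩)
  have hevT : ∀ᶠ t in 𝓝[Ici 0] t₀, t ∈ Icc 0 T := by
    have h1 : Iio T ∈ 𝓝 t₀ := Iio_mem_nhds ht₀T
    filter_upwards [mem_nhdsWithin_of_mem_nhds h1, self_mem_nhdsWithin] with t h1 h2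
    exact ⟨h2, le_of_lt h1⟩
  have key : Tendsto
      (fun t => ∫ w in Ioc 0 T, (Ioc 0 t).indicator (fun w => h w * u (t - w)) w)
      (𝓝[Ici 0] t₀)
      (𝓝 (∫ w in Ioc 0 T, (Ioc 0 t₀).indicator (fun w => h w * u (t₀ - w)) w)) := by
    apply tendsto_integral_filter_of_dominated_convergence (fun w => |h w| * M)
    · apply Eventually.of_forall
      intro t
      exact (hI.aestronglyMeasurable.mul
        ((hu.comp (continuous_const.sub continuous_id)).aestronglyMeasurable)).indicator
        measurableSet_Ioc
    · filter_upwards [hevT] with t htmem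
      apply Eventually.of_forall
      intro w
      by_cases hw : w ∈ Ioc 0 t
      · rw [indicator_of_mem hw]
        have h1 : t - w ∈ Icc (-T) T := by
          constructor
          · have := hw.2; have := htmem.2; have := hw.1; linarith
          · have := hw.1; have := htmem.2; linarith
        calc ‖h w * u (t - w)‖ = ‖h w‖ * ‖u (t - w)‖ := norm_mul _ _
          _ ≤ ‖h w‖ * M := mul_le_mul_of_nonneg_left (hM _ h1) (norm_nonneg _)
          _ = |h w| * M := by rw [Real.norm_eq_abs]
      · rw [indicator_of_notMem hw]
        simp only [norm_zero]
        positivity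
    · exact hI.norm.mul_const M
    · have hne : ∀ᵐ w ∂(volume.restrict (Ioc (0:ℝ) T)), w ≠ t₀ := by
        refine (ae_iff).mpr ?_
        have hs : {w : ℝ | ¬ w ≠ t₀} = {t₀} := by ext x; simp
        rw [hs, Measure.restrict_apply (measurableSet_singleton _)]
        exact measure_mono_null inter_subset_left (measure_singleton t₀)
      filter_upwards [hne] with w hw
      by_cases hmem : w ∈ Ioc 0 t₀
      · have hwlt : w < t₀ := lt_of_le_of_ne hmem.2 hw
        rw [indicator_of_mem hmem]
        have hcont : Tendsto (fun t => h w * u (t - w)) (𝓝[Ici 0] t₀)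
            (𝓝 (h w * u (t₀ - w))) :=
          ((continuous_const.mul (hu.comp (continuous_sub_right w))).tendsto t₀).mono_left
            nhdsWithin_le_nhds
        apply hcont.congr'
        have h1 : Ioi w ∈ 𝓝 t₀ := Ioi_mem_nhds hwlt
        filter_upwards [mem_nhdsWithin_of_mem_nhds h1] with t ht
        rw [indicator_of_mem (show w ∈ Ioc 0 t from ⟨hmem.1, le_of_lt ht⟩)]
      · rw [indicator_of_notMem hmem]
        by_cases hw0 : w ≤ 0
        · have : ∀ t : ℝ, (Ioc 0 t).indicator (fun w => h w * u (t - w)) w = 0 := by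
            intro t
            apply indicator_of_notMem
            intro hc
            exact absurd hc.1 (not_lt.mpr hw0)
          simp only [this]
          exact tendsto_const_nhds
        · push_neg at hw0
          have hwt : t₀ < w := by
            by_contra hc
            push_neg at hc
            exact hmem ⟨hw0, hc⟩
          apply tendsto_const_nhds.congr'
          have h1 : Iio w ∈ 𝓝 t₀ := Iio_mem_nhds hwt
          filter_upwards [mem_nhdsWithin_of_mem_nhds h1] with t ht
          rw [indicator_of_notMem]
          intro hc
          exact absurd hc.2 (not_le.mpr ht)
  have heq : ∀ t ∈ Icc (0:ℝ) T,
      (∫ w in Ioc 0 T, (Ioc 0 t).indicator (fun w => h w * u (t - w)) w)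
        = ∫ w in Ioc 0 t, h w * u (t - w) := by
    intro t ht
    rw [setIntegral_indicator measurableSet_Ioc]
    congr 1
    rw [Ioc_inter_Ioc]
    simp [min_eq_right ht.2]
  rw [ContinuousWithinAt]
  have := key.congr' (by
    filter_upwards [hevT] with t ht
    exact heq t ht)
  rwa [heq t₀ ⟨ht₀, ht₀T.le⟩] at this



lemma exists_K {h : ℝ → ℝ} (hh : LocallyIntegrableOn h (Ici 0)) {L T : ℝ} (hT : 0 ≤ T) :
    ∃ K : ℝ, L * ∫ w in Ioc 0 T, |h w| * Real.exp (-(K * w)) < 1 := by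
  have hI : IntegrableOn h (Ioc 0 T) :=
    (hh.integrableOn_compact_subset (fun x hx => hx.1) isCompact_Icc).mono_set
      Ioc_subset_Icc_self
  have habs : IntegrableOn (fun w => |h w|) (Ioc 0 T) := hI.norm
  have hmem : ∀ᵐ w ∂(volume.restrict (Ioc (0:ℝ) T)), w ∈ Ioc (0:ℝ) T :=
    ae_restrict_mem measurableSet_Ioc
  have tends : Tendsto (fun n : ℕ => ∫ w in Ioc 0 T, |h w| * Real.exp (-((n:ℝ) * w)))
      atTop (𝓝 (∫ w in Ioc (0:ℝ) T, (0:ℝ))) := by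
    apply tendsto_integral_of_dominated_convergence (fun w => |h w|)
    · intro n
      exact habs.aestronglyMeasurable.mul
        (Real.continuous_exp.comp (continuous_const.mul continuous_id).neg).aestronglyMeasurable
    · exact habs
    · intro n
      filter_upwards [hmem] with w hw
      have h1 : Real.exp (-((n:ℝ) * w)) ≤ 1 := by
        apply Real.exp_le_one_iff.mpr
        have h2 := hw.1
        have h3 : (0:ℝ) ≤ (n:ℝ) * w := by positivity
        linarith
      rw [Real.norm_eq_abs, abs_mul, abs_abs, abs_of_nonneg (Real.exp_nonneg _)]
      nlinarith [abs_nonneg (h w)]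
    · filter_upwards [hmem] with w hw
      have h1 : Tendsto (fun n : ℕ => Real.exp (-((n:ℝ) * w))) atTop (𝓝 0) := by
        have : ∀ n : ℕ, Real.exp (-((n:ℝ) * w)) = (Real.exp (-w)) ^ n := by
          intro n
          rw [← Real.exp_nat_mul]
          ring_nf
        simp only [this]
        apply tendsto_pow_atTop_nhds_zero_of_lt_one (Real.exp_nonneg _)
        exact Real.exp_lt_one_iff.mpr (by linarith [hw.1])
      have := h1.const_mul (|h w|)
      simpa using this
  rw [integral_zero] at tends
  have tends2 : Tendsto (fun n : ℕ => L * ∫ w in Ioc 0 T, |h w| * Real.exp (-((n:ℝ) * w)))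
      atTop (𝓝 0) := by
    have := tends.const_mul L
    simpa using this
  have : ∀ᶠ n : ℕ in atTop,
      L * ∫ w in Ioc 0 T, |h w| * Real.exp (-((n:ℝ) * w)) < 1 :=
    tends2.eventually_lt_const (by norm_num)
  obtain ⟨n, hn⟩ := this.exists
  exact ⟨n, hn⟩



lemma key_est {Ψ₀ : ℝ → ℝ} {L : ℝ} (hL : 0 ≤ L)
    (hΨLip : ∀ x y, |Ψ₀ x - Ψ₀ y| ≤ L * |x - y|)
    {h f₀ : ℝ → ℝ} (hh : LocallyIntegrableOn h (Ici 0))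
    {T K D : ℝ} (hD : 0 ≤ D)
    {u₁ u₂ : ℝ → ℝ} (hu₁ : ContinuousOn u₁ (Ici 0)) (hu₂ : ContinuousOn u₂ (Ici 0))
    (hd : ∀ x ∈ Icc (0:ℝ) T, |u₁ x - u₂ x| ≤ Real.exp (K * x) * D)
    {t : ℝ} (ht : t ∈ Icc (0:ℝ) T) :
    |Ψ₀ ((∫ w in Ioc 0 t, h w * u₁ (t - w)) + f₀ t)
      - Ψ₀ ((∫ w in Ioc 0 t, h w * u₂ (t - w)) + f₀ t)|
      ≤ L * (∫ w in Ioc 0 T, |h w| * Real.exp (-(K * w))) * (Real.exp (K * t) * D) := by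
  have hIcc : IntegrableOn h (Icc 0 T) :=
    hh.integrableOn_compact_subset (fun x hx => hx.1) isCompact_Icc
  have hIt : IntegrableOn h (Icc 0 t) := hIcc.mono_set (Icc_subset_Icc_right ht.2)
  have hcomp : ∀ (u : ℝ → ℝ), ContinuousOn u (Ici 0) →
      ContinuousOn (fun w => u (t - w)) (Icc 0 t) := by
    intro u hu
    apply hu.comp (continuous_const.sub continuous_id).continuousOn
    intro w hw
    exact sub_nonneg.2 hw.2
  have hint : ∀ u : ℝ → ℝ, ContinuousOn u (Ici 0) →
      IntegrableOn (fun w => h w * u (t - w)) (Ioc 0 t) := by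
    intro u hu
    exact (hIt.mul_continuousOn (hcomp u hu) isCompact_Icc).mono_set Ioc_subset_Icc_self
  have h1 := hint u₁ hu₁
  have h2 := hint u₂ hu₂
  -- integrable bound function on Ioc 0 t
  have hbt : IntegrableOn (fun w => |h w| * (Real.exp (K * (t - w)) * D)) (Ioc 0 t) := by
    apply IntegrableOn.mono_set _ Ioc_subset_Icc_self
    apply IntegrableOn.mul_continuousOn hIt.norm ?_ isCompact_Icc
    exact ((Real.continuous_exp.comp (continuous_const.mul
      (continuous_const.sub continuous_id))).mul continuous_const).continuousOn
  have hbT : IntegrableOn (fun w => |h w| * Real.exp (-(K * w))) (Ioc 0 T) := by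
    apply IntegrableOn.mono_set _ Ioc_subset_Icc_self
    apply IntegrableOn.mul_continuousOn hIcc.norm ?_ isCompact_Icc
    exact (Real.continuous_exp.comp (continuous_const.mul continuous_id).neg).continuousOn
  have hsub : ∀ x ∈ Ioc (0:ℝ) t, t - x ∈ Icc (0:ℝ) T := by
    intro x hx
    constructor
    · linarith [hx.2]
    · linarith [hx.1, ht.2]
  calc |Ψ₀ ((∫ w in Ioc 0 t, h w * u₁ (t - w)) + f₀ t)
      - Ψ₀ ((∫ w in Ioc 0 t, h w * u₂ (t - w)) + f₀ t)|
      ≤ L * |((∫ w in Ioc 0 t, h w * u₁ (t - w)) + f₀ t)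
          - ((∫ w in Ioc 0 t, h w * u₂ (t - w)) + f₀ t)| := hΨLip _ _
    _ = L * |∫ w in Ioc 0 t, (h w * u₁ (t - w) - h w * u₂ (t - w))| := by
        rw [add_sub_add_right_eq_sub, ← integral_sub h1 h2]
    _ ≤ L * ∫ w in Ioc 0 t, |h w * u₁ (t - w) - h w * u₂ (t - w)| := by
        apply mul_le_mul_of_nonneg_left _ hL
        simpa [Real.norm_eq_abs] using
          norm_integral_le_integral_norm (μ := volume.restrict (Ioc 0 t))
            (fun w => h w * u₁ (t - w) - h w * u₂ (t - w))
    _ ≤ L * ∫ w in Ioc 0 t, |h w| * (Real.exp (K * (t - w)) * D) := by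
        apply mul_le_mul_of_nonneg_left _ hL
        apply setIntegral_mono_on (h1.sub h2).abs hbt measurableSet_Ioc
        intro w hw
        simp only [Pi.sub_apply]
        rw [← mul_sub, abs_mul]
        apply mul_le_mul_of_nonneg_left _ (abs_nonneg _)
        exact hd (t - w) (hsub w hw)
    _ = L * ((Real.exp (K * t) * D) * ∫ w in Ioc 0 t, |h w| * Real.exp (-(K * w))) := by
        congr 1
        rw [← integral_const_mul]
        apply setIntegral_congr_fun measurableSet_Ioc
        intro w _
        have : Real.exp (K * (t - w)) = Real.exp (K * t) * Real.exp (-(K * w)) := by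
          rw [← Real.exp_add]; ring_nf
        simp only []
        rw [this]; ring
    _ ≤ L * ((Real.exp (K * t) * D) * ∫ w in Ioc 0 T, |h w| * Real.exp (-(K * w))) := by
        apply mul_le_mul_of_nonneg_left _ hL
        apply mul_le_mul_of_nonneg_left _ (by positivity)
        apply setIntegral_mono_set hbT
        · apply Eventually.of_forall
          intro w
          positivity
        · exact HasSubset.Subset.eventuallyLE (Ioc_subset_Ioc_right ht.2)
    _ = L * (∫ w in Ioc 0 T, |h w| * Real.exp (-(K * w))) * (Real.exp (K * t) * D) := by
        ring


lemma uniq {Ψ₀ : ℝ → ℝ} {L : ℝ} (hL : 0 ≤ L)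
    (hΨLip : ∀ x y, |Ψ₀ x - Ψ₀ y| ≤ L * |x - y|)
    {h f₀ : ℝ → ℝ} (hh : LocallyIntegrableOn h (Ici 0)) {T : ℝ} (hT : 0 ≤ T)
    {lam₁ lam₂ : ℝ → ℝ} (hc₁ : ContinuousOn lam₁ (Ici 0)) (hc₂ : ContinuousOn lam₂ (Ici 0))
    (he₁ : ∀ t ∈ Icc (0:ℝ) T, lam₁ t = Ψ₀ ((∫ z in Ioc 0 t, h (t - z) * lam₁ z) + f₀ t))
    (he₂ : ∀ t ∈ Icc (0:ℝ) T, lam₂ t = Ψ₀ ((∫ z in Ioc 0 t, h (t - z) * lam₂ z) + f₀ t)) :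
    ∀ t ∈ Icc (0:ℝ) T, lam₁ t = lam₂ t := by
  obtain ⟨K, hK⟩ := exists_K hh (L := L) hT
  set I := ∫ w in Ioc 0 T, |h w| * Real.exp (-(K * w)) with hIdef
  have hsub : Icc (0:ℝ) T ⊆ Ici 0 := fun x hx => hx.1
  set φ : ℝ → ℝ := fun t => |lam₁ t - lam₂ t| * Real.exp (-(K * t)) with hφdef
  have hφc : ContinuousOn φ (Icc 0 T) := by
    apply ContinuousOn.mul
    · exact (((hc₁.mono hsub).sub (hc₂.mono hsub)).abs)
    · exact Continuous.continuousOn (by continuity)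
  obtain ⟨ts, hts, hmax⟩ := isCompact_Icc.exists_isMaxOn ⟨0, left_mem_Icc.mpr hT⟩ hφc
  set D := φ ts with hDdef
  have hD0 : 0 ≤ D := mul_nonneg (abs_nonneg _) (Real.exp_nonneg _)
  have hexp : ∀ x : ℝ, Real.exp (K * x) * Real.exp (-(K * x)) = 1 := by
    intro x; rw [← Real.exp_add]; simp
  have hd : ∀ x ∈ Icc (0:ℝ) T, |lam₁ x - lam₂ x| ≤ Real.exp (K * x) * D := by
    intro x hx
    have h1 : φ x ≤ D := hmax hx
    calc |lam₁ x - lam₂ x| = Real.exp (K * x) * φ x := by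
          simp only [hφdef]
          rw [← mul_assoc, mul_comm (Real.exp (K * x)) _, mul_assoc, hexp x, mul_one]
      _ ≤ Real.exp (K * x) * D := mul_le_mul_of_nonneg_left h1 (Real.exp_nonneg _)
  have key := key_est (f₀ := f₀) hL hΨLip hh hD0 hc₁ hc₂ hd hts
  have e1 : lam₁ ts = Ψ₀ ((∫ w in Ioc 0 ts, h w * lam₁ (ts - w)) + f₀ ts) := by
    rw [he₁ ts hts, conv_eq h lam₁ hts.1]
  have e2 : lam₂ ts = Ψ₀ ((∫ w in Ioc 0 ts, h w * lam₂ (ts - w)) + f₀ ts) := by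
    rw [he₂ ts hts, conv_eq h lam₂ hts.1]
  have hDle : D ≤ (L * I) * D := by
    calc D = |lam₁ ts - lam₂ ts| * Real.exp (-(K * ts)) := rfl
      _ = |Ψ₀ ((∫ w in Ioc 0 ts, h w * lam₁ (ts - w)) + f₀ ts)
            - Ψ₀ ((∫ w in Ioc 0 ts, h w * lam₂ (ts - w)) + f₀ ts)|
            * Real.exp (-(K * ts)) := by rw [← e1, ← e2]
      _ ≤ (L * I * (Real.exp (K * ts) * D)) * Real.exp (-(K * ts)) :=
          mul_le_mul_of_nonneg_right key (Real.exp_nonneg _)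
      _ = (L * I) * D := by
          linear_combination (L * I * D) * hexp ts
  have hDnp : D ≤ 0 := by nlinarith [hDle, hK, hD0]
  have hDeq : D = 0 := le_antisymm hDnp hD0
  intro t htmem
  have h1 := hd t htmem
  rw [hDeq, mul_zero] at h1
  have h2 : |lam₁ t - lam₂ t| = 0 := le_antisymm h1 (abs_nonneg _)
  exact sub_eq_zero.mp (abs_eq_zero.mp h2)


lemma exists_sol {Ψ₀ : ℝ → ℝ} {L : ℝ} (hL : 0 ≤ L)
    (hΨLip : ∀ x y, |Ψ₀ x - Ψ₀ y| ≤ L * |x - y|)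
    {h f₀ : ℝ → ℝ} (hh : LocallyIntegrableOn h (Ici 0))
    (hf₀ : ContinuousOn f₀ (Ici 0)) {T : ℝ} (hT : 0 ≤ T) :
    ∃ lam : ℝ → ℝ, ContinuousOn lam (Ici 0) ∧
      ∀ t ∈ Icc (0:ℝ) T, lam t = Ψ₀ ((∫ z in Ioc 0 t, h (t - z) * lam z) + f₀ t) := by
  obtain ⟨K, hK⟩ := exists_K hh (L := L) hT
  set I := ∫ w in Ioc 0 T, |h w| * Real.exp (-(K * w)) with hIdef
  have hI0 : 0 ≤ I :=
    setIntegral_nonneg measurableSet_Ioc (fun w _ => by positivity)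
  set q := L * I with hqdef
  have hq0 : 0 ≤ q := mul_nonneg hL hI0
  have hq1 : q < 1 := hK
  have hexp : ∀ x : ℝ, Real.exp (K * x) * Real.exp (-(K * x)) = 1 := by
    intro x; rw [← Real.exp_add]; simp
  have hΨc : Continuous Ψ₀ := by
    have hlip : LipschitzWith (Real.toNNReal L) Ψ₀ := by
      apply LipschitzWith.of_dist_le_mul
      intro x y
      rw [Real.dist_eq, Real.dist_eq, Real.coe_toNNReal L hL]
      exact hΨLip x y
    exact hlip.continuous
  let X := C(Icc (0:ℝ) T, ℝ)
  let ug : X → ℝ → ℝ := fun g x => Real.exp (K * x) * IccExtend hT g x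
  have hugc : ∀ g : X, Continuous (ug g) := fun g =>
    (Real.continuous_exp.comp (continuous_const.mul continuous_id)).mul
      g.continuous.Icc_extend'
  let Φ : X → ℝ → ℝ := fun g t =>
    Real.exp (-(K * t)) * Ψ₀ ((∫ w in Ioc 0 t, h w * ug g (t - w)) + f₀ t)
  have hΦc : ∀ g : X, ContinuousOn (Φ g) (Ici 0) := by
    intro g
    apply ContinuousOn.mul (Continuous.continuousOn (by continuity))
    apply hΨc.comp_continuousOn
    exact (contOn_reflInt hh (hugc g)).add hf₀
  let F : X → X := fun g =>
    ⟨(Icc (0:ℝ) T).restrict (Φ g), ((hΦc g).mono (fun x hx => hx.1)).restrict⟩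
  have hFlip : ∀ g₁ g₂ : X, ∀ x : Icc (0:ℝ) T,
      dist (F g₁ x) (F g₂ x) ≤ q * dist g₁ g₂ := by
    intro g₁ g₂ x
    have hd : ∀ y ∈ Icc (0:ℝ) T, |ug g₁ y - ug g₂ y| ≤ Real.exp (K * y) * dist g₁ g₂ := by
      intro y hy
      have hb : |IccExtend hT g₁ y - IccExtend hT g₂ y| ≤ dist g₁ g₂ := by
        rw [IccExtend_apply, IccExtend_apply, ← Real.dist_eq]
        exact ContinuousMap.dist_apply_le_dist _
      calc |ug g₁ y - ug g₂ y|
          = Real.exp (K * y) * |IccExtend hT g₁ y - IccExtend hT g₂ y| := by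
            rw [show ug g₁ y - ug g₂ y
                = Real.exp (K * y) * (IccExtend hT g₁ y - IccExtend hT g₂ y) by
              simp only [ug]; ring]
            rw [abs_mul, abs_of_nonneg (Real.exp_nonneg _)]
        _ ≤ Real.exp (K * y) * dist g₁ g₂ :=
            mul_le_mul_of_nonneg_left hb (Real.exp_nonneg _)
    have key := key_est (f₀ := f₀) hL hΨLip hh dist_nonneg
      (hugc g₁).continuousOn (hugc g₂).continuousOn hd x.2
    rw [Real.dist_eq]
    show |Φ g₁ ↑x - Φ g₂ ↑x| ≤ q * dist g₁ g₂
    calc |Φ g₁ ↑x - Φ g₂ ↑x|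
        = Real.exp (-(K * ↑x)) *
            |Ψ₀ ((∫ w in Ioc 0 (↑x : ℝ), h w * ug g₁ (↑x - w)) + f₀ ↑x)
              - Ψ₀ ((∫ w in Ioc 0 (↑x : ℝ), h w * ug g₂ (↑x - w)) + f₀ ↑x)| := by
          simp only [Φ]
          rw [← mul_sub, abs_mul, abs_of_nonneg (Real.exp_nonneg _)]
      _ ≤ Real.exp (-(K * ↑x)) * ((L * I) * (Real.exp (K * ↑x) * dist g₁ g₂)) :=
          mul_le_mul_of_nonneg_left key (Real.exp_nonneg _)
      _ = q * dist g₁ g₂ := by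
          linear_combination (L * I * dist g₁ g₂) * hexp (↑x : ℝ)
  haveI : Nonempty (Icc (0:ℝ) T) := ⟨⟨0, left_mem_Icc.mpr hT⟩⟩
  haveI : Nonempty X := ⟨ContinuousMap.const _ 0⟩
  have hcontract : ContractingWith (Real.toNNReal q) F := by
    constructor
    · exact_mod_cast Real.toNNReal_lt_one.mpr hq1
    · apply LipschitzWith.of_dist_le_mul
      intro g₁ g₂
      rw [Real.coe_toNNReal q hq0]
      rw [ContinuousMap.dist_le (mul_nonneg hq0 dist_nonneg)]
      exact hFlip g₁ g₂
  set g := ContractingWith.fixedPoint F hcontract with hgdef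
  have hfix : F g = g := hcontract.fixedPoint_isFixedPt
  refine ⟨ug g, (hugc g).continuousOn, ?_⟩
  intro t htmem
  have h1 : Φ g t = g ⟨t, htmem⟩ := by
    conv_rhs => rw [← hfix]
    rfl
  have h2 : ug g t = Real.exp (K * t) * g ⟨t, htmem⟩ := by
    simp only [ug]
    rw [IccExtend_of_mem]
  rw [conv_eq h (ug g) htmem.1, h2, ← h1]
  show Real.exp (K * t) *
      (Real.exp (-(K * t)) * Ψ₀ ((∫ w in Ioc 0 t, h w * ug g (t - w)) + f₀ t)) = _
  rw [← mul_assoc, hexp t, one_mul]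

end Stmt11Aux

/-- For `Ψ₀ : ℝ → [0,∞)` Lipschitz, `h` locally integrable on `[0,∞)`
and `f₀` continuous, there is a unique continuous function `λ̄ : [0,∞) → [0,∞)` satisfying
`λ̄ t = Ψ₀(∫₀ᵗ h(t-z) λ̄ z dz + f₀ t)` for all `t ≥ 0`. -/
theorem stmt11 (Ψ₀ : ℝ → ℝ) (L : ℝ) (hL : 0 ≤ L)
    (hΨLip : ∀ x y, |Ψ₀ x - Ψ₀ y| ≤ L * |x - y|) (hΨnn : ∀ x, 0 ≤ Ψ₀ x)
    (h f₀ : ℝ → ℝ) (hh : LocallyIntegrableOn h (Ici 0))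
    (hf₀ : ContinuousOn f₀ (Ici 0)) :
    ∃ lam : ℝ → ℝ,
      (ContinuousOn lam (Ici 0) ∧ (∀ t ≥ (0:ℝ), 0 ≤ lam t) ∧
        ∀ t ≥ (0:ℝ), lam t = Ψ₀ ((∫ z in Ioc 0 t, h (t - z) * lam z) + f₀ t)) ∧
      ∀ lam' : ℝ → ℝ,
        (ContinuousOn lam' (Ici 0) ∧ (∀ t ≥ (0:ℝ), 0 ≤ lam' t) ∧
          ∀ t ≥ (0:ℝ), lam' t = Ψ₀ ((∫ z in Ioc 0 t, h (t - z) * lam' z) + f₀ t)) →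
        ∀ t ≥ (0:ℝ), lam' t = lam t := by
  classical
  have hsol : ∀ n : ℕ, ∃ lam : ℝ → ℝ, ContinuousOn lam (Ici 0) ∧
      ∀ t ∈ Icc (0:ℝ) (n:ℝ), lam t = Ψ₀ ((∫ z in Ioc 0 t, h (t - z) * lam z) + f₀ t) :=
    fun n => Stmt11Aux.exists_sol hL hΨLip hh hf₀ (Nat.cast_nonneg n)
  choose S hSc hSeq using hsol
  have agree : ∀ m n : ℕ, ∀ t ∈ Icc (0:ℝ) (min (m:ℝ) (n:ℝ)), S m t = S n t := by
    intro m n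
    apply Stmt11Aux.uniq hL hΨLip hh
      (le_min (Nat.cast_nonneg m) (Nat.cast_nonneg n)) (hSc m) (hSc n)
    · intro t ht; exact hSeq m t ⟨ht.1, ht.2.trans (min_le_left _ _)⟩
    · intro t ht; exact hSeq n t ⟨ht.1, ht.2.trans (min_le_right _ _)⟩
  set lam : ℝ → ℝ := fun t => S ⌈t⌉₊ t with hlamdef
  have lam_eq : ∀ n : ℕ, ∀ t ∈ Icc (0:ℝ) (n:ℝ), lam t = S n t := by
    intro n t ht
    exact agree ⌈t⌉₊ n t ⟨ht.1, le_min (Nat.le_ceil t) ht.2⟩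
  have heqlam : ∀ t ≥ (0:ℝ), lam t = Ψ₀ ((∫ z in Ioc 0 t, h (t - z) * lam z) + f₀ t) := by
    intro t ht
    set n : ℕ := ⌈t⌉₊ with hndef
    have htn : t ∈ Icc (0:ℝ) (n:ℝ) := ⟨ht, Nat.le_ceil t⟩
    rw [lam_eq n t htn, hSeq n t htn]
    congr 2
    apply setIntegral_congr_fun measurableSet_Ioc
    intro z hz
    simp only []
    rw [lam_eq n z ⟨le_of_lt hz.1, hz.2.trans htn.2⟩]
  have hcont : ContinuousOn lam (Ici 0) := by
    intro t₀ ht₀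
    set n : ℕ := ⌈t₀⌉₊ + 1 with hndef
    have hlt : t₀ < (n:ℝ) := by
      refine lt_of_le_of_lt (Nat.le_ceil t₀) ?_
      exact_mod_cast Nat.lt_succ_self ⌈t₀⌉₊
    have hcw : ContinuousWithinAt (S n) (Ici 0) t₀ := hSc n t₀ ht₀
    apply hcw.congr_of_eventuallyEq
    · have hmem : Ici (0:ℝ) ∩ Iio (n:ℝ) ∈ nhdsWithin t₀ (Ici 0) :=
        inter_mem self_mem_nhdsWithin (mem_nhdsWithin_of_mem_nhds (Iio_mem_nhds hlt))
      filter_upwards [hmem] with y hy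
      exact lam_eq n y ⟨hy.1, le_of_lt hy.2⟩
    · exact lam_eq n t₀ ⟨ht₀, le_of_lt hlt⟩
  have hnn : ∀ t ≥ (0:ℝ), 0 ≤ lam t := by
    intro t ht
    rw [heqlam t ht]
    exact hΨnn _
  refine ⟨lam, ⟨hcont, hnn, heqlam⟩, ?_⟩
  rintro lam' ⟨hc', -, heq'⟩ t ht
  set n : ℕ := ⌈t⌉₊ with hndef
  have := Stmt11Aux.uniq hL hΨLip hh (Nat.cast_nonneg n) hc' hcont
    (fun s hs => heq' s hs.1) (fun s hs => heqlam s hs.1)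
  exact this t ⟨ht, Nat.le_ceil t⟩
end

section
/- Let N and N̄ be point processes on ℝ that coincide on (−∞,0] and whose last point before 0 satisfies −T₀ ≤ M_{T₀} almost surely, with predictable age processes S_{t−} and S̄_{t−}. Then for every θ > 0, E[sup_{t∈[0,θ]} |S_{t−} − S̄_{t−}|] ≤ (M_{T₀} + θ) · P(sup_{t∈[0,θ]} |N_t − N̄_t| ≠ 0) ≤ (M_{T₀} + θ) · E[sup_{t∈[0,θ]} |N_t − N̄_t|]. -/
open MeasureTheory Set

/-- The predictable age at time `t` of the point configuration `N`:
`S_{t-} = t - sup{T ∈ N, T < t}`. -/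
noncomputable def predAge (N : Set ℝ) (t : ℝ) : ℝ := t - sSup {T ∈ N | T < t}

/-- The counting process of the point configuration `N`: `N_t = #(N ∩ (0,t])`. -/
noncomputable def countProc (N : Set ℝ) (t : ℝ) : ℝ := (N ∩ Ioc 0 t).ncard

/-- A nonzero difference of two counting processes has absolute value at least 1. -/
lemma count_diff_ge_one {A B : Set ℝ} {t : ℝ}
    (h : countProc A t - countProc B t ≠ 0) :
    1 ≤ |countProc A t - countProc B t| := by
  unfold countProc at *
  set m := (A ∩ Ioc 0 t).ncard with hm
  set n := (B ∩ Ioc 0 t).ncard with hn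
  have hmn : m ≠ n := by
    intro he
    apply h
    rw [he]; ring
  have hcast : ((m : ℝ) - n) = (((m : ℤ) - (n : ℤ) : ℤ) : ℝ) := by push_cast; ring
  rw [hcast, ← Int.cast_abs]
  have h1 : (1 : ℤ) ≤ |(m : ℤ) - n| :=
    Int.one_le_abs (by omega)
  exact_mod_cast h1

/-- If the counting processes of `A` and `B` agree on `[0,θ]`, then `A` and `B`
agree on `(0,θ]`. -/
lemma mem_iff_of_counts_eq {A B : Set ℝ} {θ : ℝ}
    (hA : ∀ a b : ℝ, (A ∩ Icc a b).Finite) (hB : ∀ a b : ℝ, (B ∩ Icc a b).Finite)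
    (hcount : ∀ t ∈ Icc (0:ℝ) θ, (A ∩ Ioc 0 t).ncard = (B ∩ Ioc 0 t).ncard)
    {x : ℝ} (hx : x ∈ Ioc (0:ℝ) θ) : x ∈ A ↔ x ∈ B := by
  obtain ⟨hx0, hxθ⟩ := hx
  set D : Set ℝ := (A ∪ B) ∩ Ioo 0 x with hD
  have hDfin : D.Finite := by
    apply ((hA 0 x).union (hB 0 x)).subset
    rintro y ⟨hy1 | hy1, hy2⟩
    · exact Or.inl ⟨hy1, hy2.1.le, hy2.2.le⟩
    · exact Or.inr ⟨hy1, hy2.1.le, hy2.2.le⟩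
  set E := insert (0:ℝ) D with hE
  have hEfin : E.Finite := hDfin.insert 0
  have hEne : E.Nonempty := ⟨0, mem_insert _ _⟩
  set s := sSup E with hs
  have hsE : s ∈ E := hEne.csSup_mem hEfin
  have hs0 : 0 ≤ s := le_csSup hEfin.bddAbove (mem_insert _ _)
  have hsx : s < x := by
    rcases hsE with h | h
    · rw [h]; exact hx0
    · exact h.2.2
  have hkey : ∀ C : Set ℝ, C ⊆ A ∪ B → C ∩ Ioc s x = C ∩ {x} := by
    intro C hC
    ext y
    constructor
    · rintro ⟨hyC, hys, hyx⟩
      refine ⟨hyC, ?_⟩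
      rcases lt_or_eq_of_le hyx with h | h
      · exfalso
        have hyD : y ∈ D := ⟨hC hyC, lt_of_le_of_lt hs0 hys, h⟩
        have : y ≤ s := le_csSup hEfin.bddAbove (mem_insert_of_mem _ hyD)
        linarith
      · exact h
    · rintro ⟨hyC, hy⟩
      rw [mem_singleton_iff] at hy
      subst hy
      exact ⟨hyC, hsx, le_refl _⟩
  have hsplit : ∀ C : Set ℝ, (∀ a b : ℝ, (C ∩ Icc a b).Finite) →
      (C ∩ Ioc 0 x).ncard = (C ∩ Ioc 0 s).ncard + (C ∩ Ioc s x).ncard := by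
    intro C hC
    have hu : C ∩ Ioc 0 x = (C ∩ Ioc 0 s) ∪ (C ∩ Ioc s x) := by
      rw [← inter_union_distrib_left, Ioc_union_Ioc_eq_Ioc hs0 hsx.le]
    have hd : Disjoint (C ∩ Ioc 0 s) (C ∩ Ioc s x) :=
      disjoint_left.2 fun y hy1 hy2 => not_lt.2 hy1.2.2 hy2.2.1
    have hf1 : (C ∩ Ioc 0 s).Finite := (hC 0 s).subset fun y hy => ⟨hy.1, hy.2.1.le, hy.2.2⟩
    have hf2 : (C ∩ Ioc s x).Finite := (hC s x).subset fun y hy => ⟨hy.1, hy.2.1.le, hy.2.2⟩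
    rw [hu, ncard_union_eq hd hf1 hf2]
  have hAx := hsplit A hA
  have hBx := hsplit B hB
  have h1 := hcount x ⟨hx0.le, hxθ⟩
  have h2 := hcount s ⟨hs0, le_trans hsx.le hxθ⟩
  have heq : (A ∩ {x}).ncard = (B ∩ {x}).ncard := by
    rw [← hkey A subset_union_left, ← hkey B subset_union_right]
    omega
  constructor
  · intro hxa
    have hone : (A ∩ {x}) = {x} := by
      apply subset_antisymm inter_subset_right
      intro y hy
      rw [mem_singleton_iff] at hy
      subst hy
      exact ⟨hxa, rfl⟩
    rw [hone, ncard_singleton] at heq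
    obtain ⟨y, hyB, hyx⟩ := Set.nonempty_of_ncard_ne_zero (by omega : (B ∩ {x}).ncard ≠ 0)
    rw [mem_singleton_iff] at hyx
    subst hyx
    exact hyB
  · intro hxb
    have hone : (B ∩ {x}) = {x} := by
      apply subset_antisymm inter_subset_right
      intro y hy
      rw [mem_singleton_iff] at hy
      subst hy
      exact ⟨hxb, rfl⟩
    rw [hone, ncard_singleton] at heq
    obtain ⟨y, hyA, hyx⟩ := Set.nonempty_of_ncard_ne_zero (by omega : (A ∩ {x}).ncard ≠ 0)
    rw [mem_singleton_iff] at hyx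
    subst hyx
    exact hyA

/-- Bound on the age: if `A` contains a point `T ∈ [-M₀, 0]`, then for `0 < t`,
`0 ≤ predAge A t ≤ M₀ + t`. -/
lemma predAge_bound {A : Set ℝ} {T M₀ t : ℝ} (hT : T ∈ A) (hT0 : T ≤ 0) (hTM : -T ≤ M₀)
    (ht : 0 < t) : 0 ≤ predAge A t ∧ predAge A t ≤ M₀ + t := by
  have hne : {x ∈ A | x < t}.Nonempty := ⟨T, hT, lt_of_le_of_lt hT0 ht⟩
  have hbdd : BddAbove {x ∈ A | x < t} := ⟨t, fun y hy => hy.2.le⟩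
  have h1 : T ≤ sSup {x ∈ A | x < t} := le_csSup hbdd ⟨hT, lt_of_le_of_lt hT0 ht⟩
  have h2 : sSup {x ∈ A | x < t} ≤ t := csSup_le hne fun y hy => hy.2.le
  unfold predAge
  constructor <;> linarith

/-- Let `N` and `N̄` be point processes coinciding on `(-∞,0]` whose last
point before `0` satisfies `-T₀ ≤ M₀` a.s. Then for every `θ > 0`,
`E[sup_{t∈[0,θ]} |S_{t-} − S̄_{t-}|] ≤ (M₀+θ) P(sup_{t∈[0,θ]} |N_t − N̄_t| ≠ 0)
≤ (M₀+θ) E[sup_{t∈[0,θ]} |N_t − N̄_t|]`. -/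
theorem stmt17 {Ω : Type*} [MeasurableSpace Ω] (P : Measure Ω) [IsProbabilityMeasure P]
    (N N' : Ω → Set ℝ) (M₀ : ℝ) (hM₀ : 0 ≤ M₀)
    (hfin : ∀ ω, ∀ a b : ℝ, ((N ω) ∩ Icc a b).Finite ∧ ((N' ω) ∩ Icc a b).Finite)
    (hpast : ∀ ω, (N ω) ∩ Iic 0 = (N' ω) ∩ Iic 0)
    (hT₀ : ∀ᵐ ω ∂P, ∃ T ∈ N ω, T ≤ 0 ∧ -T ≤ M₀)
    (hintAge : ∀ θ > (0:ℝ), Integrable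
      (fun ω => ⨆ t : Icc (0:ℝ) θ, |predAge (N ω) t - predAge (N' ω) t|) P)
    (hintCount : ∀ θ > (0:ℝ), Integrable
      (fun ω => ⨆ t : Icc (0:ℝ) θ, |countProc (N ω) t - countProc (N' ω) t|) P) :
    ∀ θ > (0:ℝ),
      (∫ ω, (⨆ t : Icc (0:ℝ) θ, |predAge (N ω) t - predAge (N' ω) t|) ∂P
          ≤ (M₀ + θ) *
            (P {ω | (⨆ t : Icc (0:ℝ) θ,
              |countProc (N ω) t - countProc (N' ω) t|) ≠ 0}).toReal) ∧
      (M₀ + θ) *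
          (P {ω | (⨆ t : Icc (0:ℝ) θ,
            |countProc (N ω) t - countProc (N' ω) t|) ≠ 0}).toReal
        ≤ (M₀ + θ) *
          ∫ ω, (⨆ t : Icc (0:ℝ) θ, |countProc (N ω) t - countProc (N' ω) t|) ∂P := by
  intro θ hθ
  have hne : Nonempty (Icc (0:ℝ) θ) := ⟨⟨0, le_refl _, hθ.le⟩⟩
  set g : Ω → ℝ := fun ω => ⨆ t : Icc (0:ℝ) θ, |countProc (N ω) t - countProc (N' ω) t|
    with hgdef
  set F : Ω → ℝ := fun ω => ⨆ t : Icc (0:ℝ) θ, |predAge (N ω) t - predAge (N' ω) t|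
    with hFdef
  have hMθ : (0:ℝ) ≤ M₀ + θ := by linarith
  -- the counting family is always bounded above
  have hbdd : ∀ ω, BddAbove
      (range fun t : Icc (0:ℝ) θ => |countProc (N ω) t - countProc (N' ω) t|) := by
    intro ω
    refine ⟨((N ω) ∩ Icc 0 θ).ncard + ((N' ω) ∩ Icc 0 θ).ncard, ?_⟩
    rintro y ⟨t, rfl⟩
    have hsub1 : (N ω) ∩ Ioc 0 (t:ℝ) ⊆ (N ω) ∩ Icc 0 θ :=
      fun y hy => ⟨hy.1, hy.2.1.le, le_trans hy.2.2 t.2.2⟩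
    have hsub2 : (N' ω) ∩ Ioc 0 (t:ℝ) ⊆ (N' ω) ∩ Icc 0 θ :=
      fun y hy => ⟨hy.1, hy.2.1.le, le_trans hy.2.2 t.2.2⟩
    have h1 : countProc (N ω) t ≤ ((N ω) ∩ Icc 0 θ).ncard := by
      unfold countProc
      exact_mod_cast ncard_le_ncard hsub1 (hfin ω 0 θ).1
    have h2 : countProc (N' ω) t ≤ ((N' ω) ∩ Icc 0 θ).ncard := by
      unfold countProc
      exact_mod_cast ncard_le_ncard hsub2 (hfin ω 0 θ).2
    have h3 : (0:ℝ) ≤ countProc (N ω) t := by unfold countProc; positivity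
    have h4 : (0:ℝ) ≤ countProc (N' ω) t := by unfold countProc; positivity
    rw [abs_sub_le_iff]
    constructor <;> linarith
  -- nonnegativity of g
  have hgnonneg : ∀ ω, 0 ≤ g ω := by
    intro ω
    have := le_ciSup (hbdd ω) (⟨0, le_refl _, hθ.le⟩ : Icc (0:ℝ) θ)
    exact le_trans (abs_nonneg _) this
  -- g ≠ 0 implies 1 ≤ g
  have hg1 : ∀ ω, g ω ≠ 0 → 1 ≤ g ω := by
    intro ω h
    by_contra hlt
    push_neg at hlt
    apply h
    have hall : ∀ t : Icc (0:ℝ) θ, |countProc (N ω) t - countProc (N' ω) t| = 0 := by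
      intro t
      by_contra ht
      have h1 : 1 ≤ |countProc (N ω) t - countProc (N' ω) t| := by
        apply count_diff_ge_one
        intro he
        exact ht (by rw [he, abs_zero])
      have h2 : |countProc (N ω) t - countProc (N' ω) t| ≤ g ω := le_ciSup (hbdd ω) t
      linarith
    apply le_antisymm
    · exact ciSup_le fun t => le_of_eq (hall t)
    · exact hgnonneg ω
  -- if g ω = 0 then F ω = 0
  have hF0 : ∀ ω, g ω = 0 → F ω = 0 := by
    intro ω hg0
    have hall : ∀ t ∈ Icc (0:ℝ) θ,
        ((N ω) ∩ Ioc 0 t).ncard = ((N' ω) ∩ Ioc 0 t).ncard := by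
      intro t ht
      have h1 : |countProc (N ω) t - countProc (N' ω) t| ≤ g ω :=
        le_ciSup (hbdd ω) (⟨t, ht⟩ : Icc (0:ℝ) θ)
      rw [hg0] at h1
      have h2 : |countProc (N ω) t - countProc (N' ω) t| = 0 :=
        le_antisymm h1 (abs_nonneg _)
      have h3 : countProc (N ω) t = countProc (N' ω) t := by
        have := abs_eq_zero.1 h2
        linarith
      unfold countProc at h3
      exact_mod_cast h3
    have hsets : ∀ t : Icc (0:ℝ) θ,
        {T ∈ N ω | T < (t:ℝ)} = {T ∈ N' ω | T < (t:ℝ)} := by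
      intro t
      ext T
      simp only [mem_setOf_eq]
      constructor
      · rintro ⟨hTN, hTt⟩
        refine ⟨?_, hTt⟩
        rcases le_or_gt T 0 with hT0 | hT0
        · have : T ∈ (N' ω) ∩ Iic 0 := by rw [← hpast ω]; exact ⟨hTN, hT0⟩
          exact this.1
        · exact (mem_iff_of_counts_eq (fun a b => (hfin ω a b).1)
            (fun a b => (hfin ω a b).2) hall
            ⟨hT0, le_trans hTt.le t.2.2⟩).1 hTN
      · rintro ⟨hTN, hTt⟩
        refine ⟨?_, hTt⟩
        rcases le_or_gt T 0 with hT0 | hT0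
        · have : T ∈ (N ω) ∩ Iic 0 := by rw [hpast ω]; exact ⟨hTN, hT0⟩
          exact this.1
        · exact (mem_iff_of_counts_eq (fun a b => (hfin ω a b).1)
            (fun a b => (hfin ω a b).2) hall
            ⟨hT0, le_trans hTt.le t.2.2⟩).2 hTN
    have : ∀ t : Icc (0:ℝ) θ, |predAge (N ω) t - predAge (N' ω) t| = 0 := by
      intro t
      unfold predAge
      rw [hsets t]
      simp
    rw [hFdef]
    simp only
    rw [iSup_congr this]
    exact ciSup_const
  -- a.e. bound F ≤ M₀ + θ
  have hFbound : ∀ ω, (∃ T ∈ N ω, T ≤ 0 ∧ -T ≤ M₀) → F ω ≤ M₀ + θ := by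
    rintro ω ⟨T, hTN, hT0, hTM⟩
    have hTN' : T ∈ N' ω := by
      have : T ∈ (N' ω) ∩ Iic 0 := by rw [← hpast ω]; exact ⟨hTN, hT0⟩
      exact this.1
    rw [hFdef]
    apply ciSup_le
    intro t
    rcases eq_or_lt_of_le t.2.1 with ht0 | ht0
    · -- t = 0 : the two ages coincide
      have hsets : {x ∈ N ω | x < (t:ℝ)} = {x ∈ N' ω | x < (t:ℝ)} := by
        ext y
        simp only [mem_setOf_eq]
        constructor
        · rintro ⟨hy, hyt⟩
          refine ⟨?_, hyt⟩
          have : y ∈ (N' ω) ∩ Iic 0 := by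
            rw [← hpast ω]
            exact ⟨hy, by rw [← ht0] at hyt; exact hyt.le⟩
          exact this.1
        · rintro ⟨hy, hyt⟩
          refine ⟨?_, hyt⟩
          have : y ∈ (N ω) ∩ Iic 0 := by
            rw [hpast ω]
            exact ⟨hy, by rw [← ht0] at hyt; exact hyt.le⟩
          exact this.1
      unfold predAge
      rw [hsets]
      simp only [sub_self, abs_zero]
      linarith
    · have hb1 := predAge_bound hTN hT0 hTM ht0
      have hb2 := predAge_bound hTN' hT0 hTM ht0
      have htθ : (t:ℝ) ≤ θ := t.2.2
      rw [abs_sub_le_iff]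
      constructor <;> linarith
  -- measurable version of g
  obtain ⟨g', hg'sm, hgg'⟩ := (hintCount θ hθ).1
  set s' := {ω | g' ω ≠ 0} with hs'def
  have hs' : MeasurableSet s' := by
    have : s' = (g' ⁻¹' {0})ᶜ := by
      ext ω
      simp [hs'def]
    rw [this]
    exact (hg'sm.measurable (measurableSet_singleton 0)).compl
  have hsetseq : P s' = P {ω | g ω ≠ 0} := by
    apply measure_congr
    filter_upwards [hgg'] with ω h
    have h' : g ω = g' ω := h
    change (g' ω ≠ 0) = (g ω ≠ 0)
    rw [h']
  constructor
  · -- first inequality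
    have hae : ∀ᵐ ω ∂P, F ω ≤ s'.indicator (fun _ => M₀ + θ) ω := by
      filter_upwards [hT₀, hgg'] with ω hTω hgω
      by_cases hcase : g' ω ≠ 0
      · rw [indicator_of_mem (show ω ∈ s' from hcase)]
        exact hFbound ω hTω
      · push_neg at hcase
        rw [indicator_of_notMem (show ω ∉ s' from fun hh => hh hcase)]
        have hgω' : g ω = g' ω := hgω
        exact le_of_eq (hF0 ω (hgω'.trans hcase))
    have hR : Integrable (s'.indicator fun _ => M₀ + θ) P :=
      (integrable_const _).indicator hs'
    have hle := integral_mono_ae (hintAge θ hθ) hR hae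
    rw [integral_indicator_const _ hs'] at hle
    calc ∫ ω, F ω ∂P ≤ (P s').toReal • (M₀ + θ) := hle
      _ = (M₀ + θ) * (P {ω | g ω ≠ 0}).toReal := by
          rw [hsetseq, smul_eq_mul, mul_comm]
  · -- second inequality
    have hsub : {ω | g ω ≠ 0} ⊆ {ω | 1 ≤ g ω} := fun ω h => hg1 ω h
    have hmono : P {ω | g ω ≠ 0} ≤ P {ω | 1 ≤ g ω} := measure_mono hsub
    have hmarkov := mul_meas_ge_le_integral_of_nonneg
      (Filter.Eventually.of_forall hgnonneg) (hintCount θ hθ) 1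
    rw [one_mul] at hmarkov
    have htR : (P {ω | g ω ≠ 0}).toReal ≤ (P {ω | 1 ≤ g ω}).toReal :=
      ENNReal.toReal_mono (measure_ne_top P _) hmono
    exact mul_le_mul_of_nonneg_left (le_trans htR hmarkov) hMθ
end

section
/- Let θ > 0, M > 0, and for each n let S^{n,1},…,S^{n,n} and S̄¹,…,S̄ⁿ be random variables in [0,M] with E[|S^{n,i} − S̄^i|] ≤ C n^{−1/2} for all i, where S̄¹,…,S̄ⁿ are i.i.d. with common law u having a density on [0,M]. Then E[W₁((1/n)∑_{i=1}^n δ_{S^{n,i}}, u)] ≤ (C + C̃(M)) n^{−1/2}, where W₁ is the 1-Wasserstein distance and C̃(M) depends only on M. -/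
open MeasureTheory ProbabilityTheory Set

/-- The 1-Wasserstein distance
`W₁(μ,ν) = inf { E[|X−Y|] : (X,Y) coupling of (μ,ν) }`. -/
noncomputable def W1 (μ ν : Measure ℝ) : ℝ :=
  sInf {r | ∃ π : Measure (ℝ × ℝ), IsProbabilityMeasure π ∧
    π.map Prod.fst = μ ∧ π.map Prod.snd = ν ∧ r = ∫ p, |p.1 - p.2| ∂π}

/-- The empirical measure `n⁻¹ ∑_{i} δ_{x i}`. -/
noncomputable def empMeasure (n : ℕ) (x : Fin n → ℝ) : Measure ℝ :=
  (n : ENNReal)⁻¹ • ∑ i : Fin n, Measure.dirac (x i)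

namespace Stmt19

open Filter

/-- quantile function -/
noncomputable def qf (μ : Measure ℝ) (t : ℝ) : ℝ :=
  sInf ({x | min t 1 ≤ cdf μ x} ∩ Ici 0)

lemma integrable_of_bound {α : Type*} [MeasurableSpace α] (ρ : Measure α) [IsFiniteMeasure ρ]
    (f : α → ℝ) (hf : AEStronglyMeasurable f ρ) (c : ℝ) (h : ∀ x, |f x| ≤ c) :
    Integrable f ρ :=
  Integrable.mono' (integrable_const c) hf (Filter.Eventually.of_forall (by
    simpa [Real.norm_eq_abs] using h))

variable {μ : Measure ℝ} {M : ℝ}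

section CdfFacts

variable [IsProbabilityMeasure μ]

lemma cdf_eq_one (hμ : μ (Icc 0 M) = 1) {x : ℝ} (hx : M ≤ x) : cdf μ x = 1 := by
  rw [cdf_eq_real, measureReal_def]
  have h1 : μ (Iic x) = 1 := by
    refine le_antisymm prob_le_one ?_
    rw [← hμ]
    exact measure_mono (fun y hy => le_trans hy.2 hx)
  simp [h1]

lemma cdf_eq_zero (hμ : μ (Icc 0 M) = 1) {x : ℝ} (hx : x < 0) : cdf μ x = 0 := by
  rw [cdf_eq_real, measureReal_def]
  have hc : μ (Icc 0 M)ᶜ = 0 := by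
    rw [measure_compl measurableSet_Icc (measure_ne_top _ _), hμ, measure_univ, tsub_self]
  have h1 : μ (Iic x) = 0 := by
    refine measure_mono_null (fun y hy => ?_) hc
    intro hy'
    exact absurd (le_trans hy'.1 hy) (not_le.2 hx)
  simp [h1]

lemma le_cdf_of_forall_lt {t x : ℝ} (h : ∀ y, x < y → t ≤ cdf μ y) : t ≤ cdf μ x := by
  have h1 : Tendsto (fun y => cdf μ y) (nhdsWithin x (Ioi x)) (nhds (cdf μ x)) :=
    ((cdf μ).right_continuous x).mono Ioi_subset_Ici_self
  exact ge_of_tendsto h1 (eventually_nhdsWithin_of_forall (fun y hy => h y hy))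

lemma mem_qfSet (hμ : μ (Icc 0 M) = 1) (hM : 0 ≤ M) (t : ℝ) :
    M ∈ {x | min t 1 ≤ cdf μ x} ∩ Ici 0 := by
  refine ⟨?_, hM⟩
  rw [mem_setOf_eq, cdf_eq_one hμ le_rfl]
  exact min_le_right _ _

lemma bddBelow_qfSet (t : ℝ) : BddBelow ({x | min t 1 ≤ cdf μ x} ∩ Ici 0) :=
  ⟨0, fun _ hx => hx.2⟩

lemma qf_nonneg (hμ : μ (Icc 0 M) = 1) (hM : 0 ≤ M) (t : ℝ) : 0 ≤ qf μ t :=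
  le_csInf ⟨M, mem_qfSet hμ hM t⟩ (fun _ hx => hx.2)

lemma qf_le (hμ : μ (Icc 0 M) = 1) (hM : 0 ≤ M) (t : ℝ) : qf μ t ≤ M :=
  csInf_le (bddBelow_qfSet t) (mem_qfSet hμ hM t)

lemma qf_mono (hμ : μ (Icc 0 M) = 1) (hM : 0 ≤ M) : Monotone (qf μ) := by
  intro s t hst
  refine csInf_le_csInf (bddBelow_qfSet s) ⟨M, mem_qfSet hμ hM t⟩ ?_
  intro x hx
  exact ⟨le_trans (min_le_min_right _ hst) hx.1, hx.2⟩

lemma qf_galois (hμ : μ (Icc 0 M) = 1) (hM : 0 ≤ M) {t x : ℝ} (ht : t ∈ Ioo (0:ℝ) 1) :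
    qf μ t ≤ x ↔ t ≤ cdf μ x := by
  have hmin : min t 1 = t := min_eq_left ht.2.le
  constructor
  · intro h
    refine le_cdf_of_forall_lt (fun y hy => ?_)
    obtain ⟨z, hz, hzy⟩ := exists_lt_of_csInf_lt ⟨M, mem_qfSet hμ hM t⟩ (lt_of_le_of_lt h hy)
    calc t = min t 1 := hmin.symm
    _ ≤ cdf μ z := hz.1
    _ ≤ cdf μ y := monotone_cdf μ hzy.le
  · intro h
    have hx0 : (0:ℝ) ≤ x := by
      by_contra hc
      rw [cdf_eq_zero hμ (not_le.1 hc)] at h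
      exact absurd ht.1 (not_lt.2 h)
    exact csInf_le (bddBelow_qfSet t) ⟨by rw [mem_setOf_eq, hmin]; exact h, hx0⟩

lemma isProbRestrict : IsProbabilityMeasure (volume.restrict (Ioo (0:ℝ) 1)) := by
  constructor
  simp [Real.volume_Ioo]

lemma map_qf (hμ : μ (Icc 0 M) = 1) (hM : 0 ≤ M) :
    (volume.restrict (Ioo (0:ℝ) 1)).map (qf μ) = μ := by
  have hQm : Measurable (qf μ) := (qf_mono hμ hM).measurable
  haveI := isProbRestrict
  haveI : IsProbabilityMeasure ((volume.restrict (Ioo (0:ℝ) 1)).map (qf μ)) :=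
    Measure.isProbabilityMeasure_map hQm.aemeasurable
  refine Measure.ext_of_Iic _ _ (fun x => ?_)
  rw [Measure.map_apply hQm measurableSet_Iic, Measure.restrict_apply (hQm measurableSet_Iic)]
  have hsub1 : Ioo 0 (cdf μ x) ⊆ qf μ ⁻¹' Iic x ∩ Ioo 0 1 := by
    intro t ht
    have ht1 : t ∈ Ioo (0:ℝ) 1 := ⟨ht.1, lt_of_lt_of_le ht.2 (cdf_le_one μ x)⟩
    exact ⟨by rw [mem_preimage, mem_Iic, qf_galois hμ hM ht1]; exact ht.2.le, ht1⟩
  have hsub2 : qf μ ⁻¹' Iic x ∩ Ioo 0 1 ⊆ Ioc 0 (cdf μ x) := by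
    intro t ht
    exact ⟨ht.2.1, (qf_galois hμ hM ht.2).1 ht.1⟩
  have hv : volume (qf μ ⁻¹' Iic x ∩ Ioo 0 1) = ENNReal.ofReal (cdf μ x) := by
    refine le_antisymm (le_trans (measure_mono hsub2) ?_) (le_trans ?_ (measure_mono hsub1))
    · rw [Real.volume_Ioc, sub_zero]
    · rw [Real.volume_Ioo, sub_zero]
  rw [hv, ofReal_cdf]

end CdfFacts

/-- key indicator integral identity on `[0,M)` -/
lemma ind_abs_eq_of_le (hM : 0 ≤ M) {a b : ℝ} (ha : a ∈ Icc 0 M) (hb : b ∈ Icc 0 M)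
    (hba : b ≤ a) :
    ∫ s in Ico (0:ℝ) M, |(if a ≤ s then (1:ℝ) else 0) - (if b ≤ s then 1 else 0)| = a - b := by
  have heq : (fun s => |(if a ≤ s then (1:ℝ) else 0) - (if b ≤ s then 1 else 0)|)
      = (Ico b a).indicator (fun _ => (1:ℝ)) := by
    funext s
    by_cases h1 : a ≤ s
    · have h2 : b ≤ s := le_trans hba h1
      simp [h1, h2, indicator_apply, mem_Ico, not_lt.2 h1]
    · by_cases h2 : b ≤ s
      · simp [h1, h2, indicator_apply, mem_Ico, not_le.1 h1]
      · simp [h1, h2, indicator_apply, mem_Ico, h2]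
  rw [heq, integral_indicator measurableSet_Ico, setIntegral_const,
    measureReal_restrict_apply measurableSet_Ico, measureReal_def]
  have hss : Ico b a ∩ Ico 0 M = Ico b a := by
    rw [inter_eq_left]
    exact Ico_subset_Ico hb.1 ha.2
  rw [hss, Real.volume_Ico, ENNReal.toReal_ofReal (by linarith),
    smul_eq_mul, mul_one]

lemma ind_abs_eq (hM : 0 ≤ M) {a b : ℝ} (ha : a ∈ Icc 0 M) (hb : b ∈ Icc 0 M) :
    ∫ s in Ico (0:ℝ) M, |(if a ≤ s then (1:ℝ) else 0) - (if b ≤ s then 1 else 0)| = |a - b| := by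
  rcases le_total b a with h | h
  · rw [ind_abs_eq_of_le hM ha hb h, abs_of_nonneg (by linarith)]
  · have : ∀ s : ℝ, |(if a ≤ s then (1:ℝ) else 0) - (if b ≤ s then 1 else 0)|
        = |(if b ≤ s then (1:ℝ) else 0) - (if a ≤ s then 1 else 0)| := fun s => abs_sub_comm _ _
    simp_rw [this]
    rw [ind_abs_eq_of_le hM hb ha h, abs_sub_comm, abs_of_nonneg (by linarith)]

/-- key indicator integral identity on `(0,1)` -/
lemma ind_abs_eq'_of_le {p q : ℝ} (hq : 0 ≤ q) (hp : p ≤ 1) (hqp : q ≤ p) :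
    ∫ t in Ioo (0:ℝ) 1, |(if t ≤ p then (1:ℝ) else 0) - (if t ≤ q then 1 else 0)| = p - q := by
  have heq : (fun t => |(if t ≤ p then (1:ℝ) else 0) - (if t ≤ q then 1 else 0)|)
      = (Ioc q p).indicator (fun _ => (1:ℝ)) := by
    funext t
    by_cases h2 : t ≤ q
    · have h1 : t ≤ p := le_trans h2 hqp
      simp [h1, h2, indicator_apply, mem_Ioc, not_lt.2 h2]
    · by_cases h1 : t ≤ p
      · simp [h1, h2, indicator_apply, mem_Ioc, not_le.1 h2]
      · simp [h1, h2, indicator_apply, mem_Ioc]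
  rw [heq, integral_indicator measurableSet_Ioc, setIntegral_const,
    measureReal_restrict_apply measurableSet_Ioc, measureReal_def]
  have hv : volume (Ioc q p ∩ Ioo 0 1) = ENNReal.ofReal (p - q) := by
    refine le_antisymm (le_trans (measure_mono inter_subset_left) ?_) ?_
    · rw [Real.volume_Ioc]
    · have hsub : Ioo q p ⊆ Ioc q p ∩ Ioo 0 1 := by
        intro t ht
        exact ⟨⟨ht.1, ht.2.le⟩, ⟨lt_of_le_of_lt hq ht.1, lt_of_lt_of_le ht.2 hp⟩⟩
      refine le_trans ?_ (measure_mono hsub)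
      rw [Real.volume_Ioo]
  rw [hv, ENNReal.toReal_ofReal (by linarith), smul_eq_mul, mul_one]

lemma ind_abs_eq' {p q : ℝ} (hp0 : 0 ≤ p) (hp1 : p ≤ 1) (hq0 : 0 ≤ q) (hq1 : q ≤ 1) :
    ∫ t in Ioo (0:ℝ) 1, |(if t ≤ p then (1:ℝ) else 0) - (if t ≤ q then 1 else 0)| = |p - q| := by
  rcases le_total q p with h | h
  · rw [ind_abs_eq'_of_le hq0 hp1 h, abs_of_nonneg (by linarith)]
  · have : ∀ t : ℝ, |(if t ≤ p then (1:ℝ) else 0) - (if t ≤ q then 1 else 0)|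
        = |(if t ≤ q then (1:ℝ) else 0) - (if t ≤ p then 1 else 0)| := fun t => abs_sub_comm _ _
    simp_rw [this]
    rw [ind_abs_eq'_of_le hp0 hq1 h, abs_sub_comm, abs_of_nonneg (by linarith)]

lemma measurable_cdf (ν : Measure ℝ) : Measurable (cdf ν) := (monotone_cdf ν).measurable

/-- Lemma A : W1 is bounded by the L1 distance of cdfs. -/
lemma W1_le (μ ν : Measure ℝ) [IsProbabilityMeasure μ] [IsProbabilityMeasure ν]
    (hM : 0 ≤ M) (hμ : μ (Icc 0 M) = 1) (hν : ν (Icc 0 M) = 1) :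
    W1 μ ν ≤ ∫ s in Ico (0:ℝ) M, |cdf μ s - cdf ν s| := by
  have hQμ : Measurable (qf μ) := (qf_mono hμ hM).measurable
  have hQν : Measurable (qf ν) := (qf_mono hν hM).measurable
  set ν₀ := volume.restrict (Ioo (0:ℝ) 1) with hν₀
  haveI : IsProbabilityMeasure ν₀ := isProbRestrict
  have hQQ : Measurable (fun t => (qf μ t, qf ν t)) := hQμ.prodMk hQν
  set π := ν₀.map (fun t => (qf μ t, qf ν t)) with hπdef
  haveI hπ : IsProbabilityMeasure π := Measure.isProbabilityMeasure_map hQQ.aemeasurable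
  have h1 : π.map Prod.fst = μ := by
    rw [hπdef, Measure.map_map measurable_fst hQQ]
    exact map_qf hμ hM
  have h2 : π.map Prod.snd = ν := by
    rw [hπdef, Measure.map_map measurable_snd hQQ]
    exact map_qf hν hM
  have hbdd : BddBelow {r | ∃ π : Measure (ℝ × ℝ), IsProbabilityMeasure π ∧
      π.map Prod.fst = μ ∧ π.map Prod.snd = ν ∧ r = ∫ p, |p.1 - p.2| ∂π} := by
    refine ⟨0, ?_⟩
    rintro r ⟨π', hπ', _, _, rfl⟩
    exact integral_nonneg (fun p => abs_nonneg _)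
  have hW1 : W1 μ ν ≤ ∫ p, |p.1 - p.2| ∂π :=
    csInf_le hbdd ⟨π, hπ, h1, h2, rfl⟩
  have hcost : ∫ p, |p.1 - p.2| ∂π = ∫ t in Ioo (0:ℝ) 1, |qf μ t - qf ν t| := by
    rw [hπdef]
    exact integral_map hQQ.aemeasurable
      (Continuous.aestronglyMeasurable (by fun_prop))
  refine le_trans hW1 (le_of_eq ?_)
  rw [hcost]
  -- rewrite the quantile distance as a double integral
  have key : ∫ t in Ioo (0:ℝ) 1, |qf μ t - qf ν t|
      = ∫ t in Ioo (0:ℝ) 1, ∫ s in Ico (0:ℝ) M,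
          |(if t ≤ cdf μ s then (1:ℝ) else 0) - (if t ≤ cdf ν s then 1 else 0)| := by
    refine setIntegral_congr_fun measurableSet_Ioo (fun t ht => ?_)
    rw [← ind_abs_eq hM ⟨qf_nonneg hμ hM t, qf_le hμ hM t⟩ ⟨qf_nonneg hν hM t, qf_le hν hM t⟩]
    refine setIntegral_congr_fun measurableSet_Ico (fun s _ => ?_)
    have e1 : (if qf μ t ≤ s then (1:ℝ) else 0) = (if t ≤ cdf μ s then 1 else 0) :=
      if_congr (qf_galois hμ hM ht) rfl rfl
    have e2 : (if qf ν t ≤ s then (1:ℝ) else 0) = (if t ≤ cdf ν s then 1 else 0) :=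
      if_congr (qf_galois hν hM ht) rfl rfl
    rw [e1, e2]
  rw [key]
  have hmeas : ∀ ρ : Measure ℝ, Measurable (fun p : ℝ × ℝ => (if p.1 ≤ cdf ρ p.2 then (1:ℝ) else 0)) := by
    intro ρ
    refine Measurable.ite ?_ measurable_const measurable_const
    exact measurableSet_le measurable_fst ((measurable_cdf ρ).comp measurable_snd)
  have hswap : ∫ t in Ioo (0:ℝ) 1, ∫ s in Ico (0:ℝ) M,
        |(if t ≤ cdf μ s then (1:ℝ) else 0) - (if t ≤ cdf ν s then 1 else 0)|
      = ∫ s in Ico (0:ℝ) M, ∫ t in Ioo (0:ℝ) 1,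
        |(if t ≤ cdf μ s then (1:ℝ) else 0) - (if t ≤ cdf ν s then 1 else 0)| := by
    refine integral_integral_swap ?_
    refine integrable_of_bound _ _ ?_ 2 ?_
    · exact (((hmeas μ).sub (hmeas ν)).abs).aestronglyMeasurable
    · intro p
      simp only [Function.uncurry]
      rw [abs_abs]
      have h1 : |(if p.1 ≤ cdf μ p.2 then (1:ℝ) else 0)| ≤ 1 := by
        split <;> simp
      have h2 : |(if p.1 ≤ cdf ν p.2 then (1:ℝ) else 0)| ≤ 1 := by
        split <;> simp
      calc |(if p.1 ≤ cdf μ p.2 then (1:ℝ) else 0) - (if p.1 ≤ cdf ν p.2 then 1 else 0)|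
          ≤ _ + _ := abs_sub _ _
      _ ≤ 2 := by linarith
  rw [hswap]
  refine setIntegral_congr_fun measurableSet_Ico (fun s _ => ?_)
  exact ind_abs_eq' (cdf_nonneg μ s) (cdf_le_one μ s) (cdf_nonneg ν s) (cdf_le_one ν s)

lemma prob_bound {Ω : Type} [MeasurableSpace Ω] (P : Measure Ω) [IsProbabilityMeasure P]
    {n : ℕ} (hn : 0 < n) (Sb : Fin n → Ω → ℝ) (hSbm : ∀ i, Measurable (Sb i))
    (hindep : iIndepFun Sb P) (uLaw : Measure ℝ)
    [IsProbabilityMeasure uLaw] (hmap : ∀ i, P.map (Sb i) = uLaw) (s : ℝ) :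
    ∫ ω, |(n:ℝ)⁻¹ * ∑ i, (if Sb i ω ≤ s then (1:ℝ) else 0) - (uLaw (Iic s)).toReal| ∂P
      ≤ 2⁻¹ * (Real.sqrt n)⁻¹ := by
  set p : ℝ := (uLaw (Iic s)).toReal with hp
  have hp0 : 0 ≤ p := ENNReal.toReal_nonneg
  have hp1 : p ≤ 1 := by
    rw [hp]
    exact ENNReal.toReal_le_of_le_ofReal zero_le_one (by simpa using prob_le_one)
  set g : ℝ → ℝ := fun x => (if x ≤ s then (1:ℝ) else 0) - p with hg
  have hgm : Measurable g :=
    (Measurable.ite measurableSet_Iic measurable_const measurable_const).sub measurable_const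
  set Z : Fin n → Ω → ℝ := fun i ω => g (Sb i ω) with hZdef
  have hZm : ∀ i, Measurable (Z i) := fun i => hgm.comp (hSbm i)
  have hZb : ∀ i ω, |Z i ω| ≤ 1 := by
    intro i ω
    simp only [hZdef, hg]
    rw [abs_le]
    constructor <;> split <;> linarith
  have hZint : ∀ i, Integrable (Z i) P :=
    fun i => integrable_of_bound P _ (hZm i).aestronglyMeasurable 1 (hZb i)
  have hEZ : ∀ i, ∫ ω, Z i ω ∂P = 0 := by
    intro i
    have hiind : (fun ω => (if Sb i ω ≤ s then (1:ℝ) else 0))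
        = (Sb i ⁻¹' Iic s).indicator (fun _ => (1:ℝ)) := by
      funext ω
      by_cases h : Sb i ω ≤ s <;> simp [h, Set.indicator, mem_preimage]
    have hχint : Integrable (fun ω => (if Sb i ω ≤ s then (1:ℝ) else 0)) P := by
      refine integrable_of_bound P _ ?_ 1 ?_
      · exact ((Measurable.ite measurableSet_Iic measurable_const measurable_const).comp
          (hSbm i) : Measurable fun ω => if Sb i ω ≤ s then (1:ℝ) else 0).aestronglyMeasurable
      · intro ω; split <;> simp
    have h1 : ∫ ω, (if Sb i ω ≤ s then (1:ℝ) else 0) ∂P = p := by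
      rw [hiind, integral_indicator ((hSbm i) measurableSet_Iic), setIntegral_const,
        smul_eq_mul, mul_one, ← map_measureReal_apply (hSbm i) measurableSet_Iic, hmap i, measureReal_def]
    have h2 : ∫ ω, Z i ω ∂P = ∫ ω, ((if Sb i ω ≤ s then (1:ℝ) else 0) - p) ∂P := rfl
    rw [h2, integral_sub hχint (integrable_const p), h1, integral_const]
    simp
  have hindZ : iIndepFun Z P := hindep.comp (fun _ => g) (fun _ => hgm)
  have hcross : ∀ i j, i ≠ j → ∫ ω, Z i ω * Z j ω ∂P = 0 := by
    intro i j hij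
    have := (hindZ.indepFun hij).integral_mul_eq_mul_integral (hZint i).aestronglyMeasurable (hZint j).aestronglyMeasurable
    calc ∫ ω, Z i ω * Z j ω ∂P = ∫ ω, (Z i * Z j) ω ∂P := rfl
    _ = (∫ ω, Z i ω ∂P) * ∫ ω, Z j ω ∂P := this
    _ = 0 := by rw [hEZ i, zero_mul]
  have hZsq : ∀ i, ∫ ω, Z i ω * Z i ω ∂P = p - p ^ 2 := by
    intro i
    have hptw : ∀ ω, Z i ω * Z i ω = (1 - 2 * p) * (if Sb i ω ≤ s then (1:ℝ) else 0) + p ^ 2 := by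
      intro ω
      simp only [hZdef, hg]
      split <;> ring
    simp_rw [hptw]
    have hχint : Integrable (fun ω => (if Sb i ω ≤ s then (1:ℝ) else 0)) P := by
      refine integrable_of_bound P _ ?_ 1 ?_
      · exact ((Measurable.ite measurableSet_Iic measurable_const measurable_const).comp
          (hSbm i) : Measurable fun ω => if Sb i ω ≤ s then (1:ℝ) else 0).aestronglyMeasurable
      · intro ω; split <;> simp
    have h1 : ∫ ω, (if Sb i ω ≤ s then (1:ℝ) else 0) ∂P = p := by
      have hiind : (fun ω => (if Sb i ω ≤ s then (1:ℝ) else 0))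
          = (Sb i ⁻¹' Iic s).indicator (fun _ => (1:ℝ)) := by
        funext ω
        by_cases h : Sb i ω ≤ s <;> simp [h, Set.indicator, mem_preimage]
      rw [hiind, integral_indicator ((hSbm i) measurableSet_Iic), setIntegral_const,
        smul_eq_mul, mul_one, ← map_measureReal_apply (hSbm i) measurableSet_Iic, hmap i, measureReal_def]
    rw [integral_add (hχint.const_mul _) (integrable_const _), integral_const_mul, h1,
      integral_const]
    simp
    ring
  set Y : Ω → ℝ := fun ω => ∑ i, Z i ω with hY
  have hYm : Measurable Y := by
    apply Finset.measurable_sum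
    exact fun i _ => hZm i
  have hYb : ∀ ω, |Y ω| ≤ n := by
    intro ω
    calc |Y ω| ≤ ∑ i, |Z i ω| := Finset.abs_sum_le_sum_abs _ _
    _ ≤ ∑ _i : Fin n, (1:ℝ) := Finset.sum_le_sum (fun i _ => hZb i ω)
    _ = n := by simp
  have hYint : Integrable Y P := integrable_of_bound P _ hYm.aestronglyMeasurable n hYb
  have hYsqint : Integrable (fun ω => Y ω ^ 2) P := by
    refine integrable_of_bound P _ ((hYm.pow_const 2).aestronglyMeasurable) ((n:ℝ) ^ 2) ?_
    intro ω
    rw [abs_of_nonneg (sq_nonneg _)]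
    nlinarith [hYb ω, abs_nonneg (Y ω), sq_abs (Y ω)]
  have hEY2 : ∫ ω, Y ω ^ 2 ∂P ≤ (n:ℝ) / 4 := by
    have hexp : ∀ ω, Y ω ^ 2 = ∑ i, ∑ j, Z i ω * Z j ω := by
      intro ω
      rw [hY, sq, Finset.sum_mul_sum]
    simp_rw [hexp]
    have hint2 : ∀ i j, Integrable (fun ω => Z i ω * Z j ω) P := by
      intro i j
      refine integrable_of_bound P _ ((hZm i).mul (hZm j)).aestronglyMeasurable 1 ?_
      intro ω
      rw [abs_mul]
      calc |Z i ω| * |Z j ω| ≤ 1 * 1 :=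
        mul_le_mul (hZb i ω) (hZb j ω) (abs_nonneg _) zero_le_one
      _ = 1 := mul_one 1
    rw [integral_finset_sum _ (fun i _ => integrable_finset_sum _ (fun j _ => hint2 i j))]
    have hdiag : ∀ i : Fin n, ∫ ω, ∑ j, Z i ω * Z j ω ∂P = p - p ^ 2 := by
      intro i
      rw [integral_finset_sum _ (fun j _ => hint2 i j)]
      rw [Finset.sum_eq_single i]
      · exact hZsq i
      · intro j _ hji
        exact hcross i j (Ne.symm hji)
      · intro h
        exact absurd (Finset.mem_univ i) h
    calc ∑ i : Fin n, ∫ ω, ∑ j, Z i ω * Z j ω ∂P = ∑ _i : Fin n, (p - p ^ 2) :=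
      Finset.sum_congr rfl (fun i _ => hdiag i)
    _ = n * (p - p ^ 2) := by simp [mul_comm]; ring
    _ ≤ (n:ℝ) / 4 := by
      have hn' : (0:ℝ) ≤ n := Nat.cast_nonneg n
      nlinarith [sq_nonneg (p - 1/2)]
  -- AM-GM step
  set c : ℝ := Real.sqrt n / 2 with hc
  have hsq : Real.sqrt n * Real.sqrt n = n := Real.mul_self_sqrt (Nat.cast_nonneg n)
  have hsn : 0 < Real.sqrt n := Real.sqrt_pos.2 (by exact_mod_cast hn)
  have hc0 : 0 < c := by positivity
  have hEabsY : ∫ ω, |Y ω| ∂P ≤ Real.sqrt n / 2 := by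
    have hptw : ∀ ω, |Y ω| ≤ Y ω ^ 2 / (2 * c) + c / 2 := by
      intro ω
      have h1 : 0 ≤ (|Y ω| - c) ^ 2 := sq_nonneg _
      have h2 : Y ω ^ 2 = |Y ω| ^ 2 := (sq_abs _).symm
      rw [div_add_div _ _ (by positivity) (by norm_num : (2:ℝ) ≠ 0), le_div_iff₀ (by positivity)]
      nlinarith
    have hint1 : Integrable (fun ω => |Y ω|) P := hYint.abs
    have hint2 : Integrable (fun ω => Y ω ^ 2 / (2 * c) + c / 2) P :=
      (hYsqint.div_const _).add (integrable_const _)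
    calc ∫ ω, |Y ω| ∂P ≤ ∫ ω, (Y ω ^ 2 / (2 * c) + c / 2) ∂P :=
      integral_mono hint1 hint2 hptw
    _ = (∫ ω, Y ω ^ 2 ∂P) / (2 * c) + c / 2 := by
      rw [integral_add (hYsqint.div_const _) (integrable_const _), integral_div,
        integral_const]
      simp
    _ ≤ ((n:ℝ) / 4) / (2 * c) + c / 2 := by
      have : (0:ℝ) < 2 * c := by positivity
      gcongr
    _ = Real.sqrt n / 2 := by
      rw [hc]
      field_simp
      nlinarith
  -- conclude
  have hrw : ∀ ω, |(n:ℝ)⁻¹ * ∑ i, (if Sb i ω ≤ s then (1:ℝ) else 0) - p|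
      = (n:ℝ)⁻¹ * |Y ω| := by
    intro ω
    have hne : (n:ℝ) ≠ 0 := Nat.cast_ne_zero.2 hn.ne'
    have : (n:ℝ)⁻¹ * ∑ i, (if Sb i ω ≤ s then (1:ℝ) else 0) - p = (n:ℝ)⁻¹ * Y ω := by
      rw [hY]
      simp only [hZdef, hg]
      rw [Finset.sum_sub_distrib]
      simp only [Finset.sum_const, Finset.card_univ, Fintype.card_fin, nsmul_eq_mul]
      field_simp
    rw [this, abs_mul, abs_of_nonneg (by positivity : (0:ℝ) ≤ (n:ℝ)⁻¹)]
  simp_rw [hrw]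
  rw [integral_const_mul]
  have h3 : (n:ℝ)⁻¹ * ∫ ω, |Y ω| ∂P ≤ (n:ℝ)⁻¹ * (Real.sqrt n / 2) :=
    mul_le_mul_of_nonneg_left hEabsY (by positivity)
  have h4 : (n:ℝ)⁻¹ * (Real.sqrt n / 2) = 2⁻¹ * (Real.sqrt n)⁻¹ := by
    rw [show ((n:ℕ):ℝ) = Real.sqrt n * Real.sqrt n from hsq.symm]
    rw [mul_inv]
    field_simp
    rw [Real.sqrt_sq hsn.le]
  linarith

lemma emp_apply {n : ℕ} (x : Fin n → ℝ) (t : Set ℝ) :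
    empMeasure n x t = (n : ENNReal)⁻¹ * ∑ i, Measure.dirac (x i) t := by
  rw [empMeasure, Measure.smul_apply, Measure.finset_sum_apply]
  simp [smul_eq_mul]

lemma emp_prob {n : ℕ} (hn : 0 < n) (x : Fin n → ℝ) :
    IsProbabilityMeasure (empMeasure n x) := by
  constructor
  rw [emp_apply]
  simp only [measure_univ, Finset.sum_const, Finset.card_univ, Fintype.card_fin, nsmul_eq_mul,
    mul_one]
  exact ENNReal.inv_mul_cancel (Nat.cast_ne_zero.2 hn.ne') (ENNReal.natCast_ne_top n)

lemma emp_Icc {n : ℕ} (hn : 0 < n) {M : ℝ} (x : Fin n → ℝ) (hx : ∀ i, x i ∈ Icc 0 M) :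
    empMeasure n x (Icc 0 M) = 1 := by
  rw [emp_apply]
  have hd : ∀ i : Fin n, Measure.dirac (x i) (Icc 0 M) = 1 := fun i => by
    rw [Measure.dirac_apply' _ measurableSet_Icc]
    simp [indicator, hx i]
  simp_rw [hd]
  simp only [Finset.sum_const, Finset.card_univ, Fintype.card_fin, nsmul_eq_mul, mul_one]
  exact ENNReal.inv_mul_cancel (Nat.cast_ne_zero.2 hn.ne') (ENNReal.natCast_ne_top n)

lemma emp_cdf {n : ℕ} (hn : 0 < n) (x : Fin n → ℝ) (s : ℝ) :
    cdf (empMeasure n x) s = (n:ℝ)⁻¹ * ∑ i, (if x i ≤ s then (1:ℝ) else 0) := by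
  haveI := emp_prob hn x
  rw [cdf_eq_real, measureReal_def, emp_apply]
  have hd : ∀ i : Fin n, Measure.dirac (x i) (Iic s) = if x i ≤ s then (1:ENNReal) else 0 := by
    intro i
    rw [Measure.dirac_apply' _ measurableSet_Iic]
    by_cases h : x i ≤ s <;> simp [indicator, h]
  simp_rw [hd]
  rw [ENNReal.toReal_mul, ENNReal.toReal_inv, ENNReal.toReal_natCast, ENNReal.toReal_sum]
  · congr 1
    refine Finset.sum_congr rfl (fun i _ => ?_)
    by_cases h : x i ≤ s <;> simp [h]
  · intro i _
    by_cases h : x i ≤ s <;> simp [h]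

end Stmt19

theorem stmt19 (M : ℝ) (hM : 0 < M) :
    ∃ Ct : ℝ, ∀ (Ω : Type) (_ : MeasurableSpace Ω) (P : Measure Ω),
      IsProbabilityMeasure P →
      ∀ (n : ℕ), 0 < n → ∀ (S Sb : Fin n → Ω → ℝ) (C : ℝ), 0 ≤ C →
        ∀ (uLaw : Measure ℝ), IsProbabilityMeasure uLaw → uLaw ≪ volume →
        (∀ i, Measurable (S i)) → (∀ i, Measurable (Sb i)) →
        (∀ i ω, S i ω ∈ Icc 0 M) → (∀ i ω, Sb i ω ∈ Icc 0 M) →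
        iIndepFun Sb P →
        (∀ i, P.map (Sb i) = uLaw) →
        (∀ i, ∫ ω, |S i ω - Sb i ω| ∂P ≤ C * (Real.sqrt n)⁻¹) →
        Integrable (fun ω => W1 (empMeasure n (fun i => S i ω)) uLaw) P →
        ∫ ω, W1 (empMeasure n (fun i => S i ω)) uLaw ∂P
          ≤ (C + Ct) * (Real.sqrt n)⁻¹ := by
  classical
  refine ⟨M / 2, ?_⟩
  intro Ω mΩ P hP n hn S Sb C hC uLaw huP huac hSm hSbm hSmem hSbmem hindep hmap hL1 hInt
  haveI := hP; haveI := huP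
  open Stmt19 in
  set Fu : ℝ → ℝ := fun s => (uLaw (Iic s)).toReal with hFu
  have i0 : Fin n := ⟨0, hn⟩
  have huIcc : uLaw (Icc 0 M) = 1 := by
    rw [← hmap i0, Measure.map_apply (hSbm i0) measurableSet_Icc]
    have h : Sb i0 ⁻¹' Icc 0 M = univ := eq_univ_of_forall (fun ω => hSbmem i0 ω)
    rw [h, measure_univ]
  have hM0 : (0:ℝ) ≤ M := hM.le
  have hnR : (0:ℝ) < n := by exact_mod_cast hn
  set ρ : Measure ℝ := volume.restrict (Ico (0:ℝ) M) with hρ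
  haveI : IsFiniteMeasure ρ := by
    constructor
    rw [hρ, Measure.restrict_apply_univ, Real.volume_Ico]
    exact ENNReal.ofReal_lt_top
  -- measurability of Fu
  have hFum : Measurable Fu := Monotone.measurable (fun a b hab =>
    ENNReal.toReal_mono (measure_ne_top _ _) (measure_mono (Iic_subset_Iic.2 hab)))
  have hFu1 : ∀ s, |Fu s| ≤ 1 := by
    intro s
    rw [abs_of_nonneg ENNReal.toReal_nonneg]
    exact ENNReal.toReal_le_of_le_ofReal zero_le_one (by simpa using prob_le_one)
  -- basic indicator measurability/bounds in s
  have hχm : ∀ c : ℝ, Measurable (fun s : ℝ => if c ≤ s then (1:ℝ) else 0) :=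
    fun c => Measurable.ite measurableSet_Ici measurable_const measurable_const
  have hχb : ∀ (c s : ℝ), |(if c ≤ s then (1:ℝ) else 0)| ≤ 1 := by
    intro c s; split <;> simp
  have hfm : ∀ (y : Fin n → ℝ), Measurable (fun s : ℝ => (n:ℝ)⁻¹ * ∑ i, (if y i ≤ s then (1:ℝ) else 0)) := by
    intro y
    exact (Finset.measurable_sum _ (fun i _ => hχm (y i))).const_mul _
  have hfb : ∀ (y : Fin n → ℝ) (s : ℝ), |(n:ℝ)⁻¹ * ∑ i, (if y i ≤ s then (1:ℝ) else 0)| ≤ 1 := by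
    intro y s
    rw [abs_mul, abs_of_nonneg (by positivity : (0:ℝ) ≤ (n:ℝ)⁻¹)]
    calc (n:ℝ)⁻¹ * |∑ i, (if y i ≤ s then (1:ℝ) else 0)|
        ≤ (n:ℝ)⁻¹ * ∑ i, |(if y i ≤ s then (1:ℝ) else 0)| := by
          exact mul_le_mul_of_nonneg_left (Finset.abs_sum_le_sum_abs _ _) (by positivity)
    _ ≤ (n:ℝ)⁻¹ * ∑ _i : Fin n, (1:ℝ) :=
          mul_le_mul_of_nonneg_left (Finset.sum_le_sum (fun i _ => hχb _ s)) (by positivity)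
    _ = 1 := by
          simp only [Finset.sum_const, Finset.card_univ, Fintype.card_fin, nsmul_eq_mul, mul_one]
          exact inv_mul_cancel₀ hnR.ne'
  set A : Ω → ℝ := fun ω => (n:ℝ)⁻¹ * ∑ i, |S i ω - Sb i ω| with hA
  set gfun : Ω → ℝ := fun ω =>
    ∫ s in Ico (0:ℝ) M, |(n:ℝ)⁻¹ * ∑ i, (if Sb i ω ≤ s then (1:ℝ) else 0) - Fu s| with hgfun
  -- pointwise bound
  have hkey : ∀ ω, W1 (empMeasure n (fun i => S i ω)) uLaw ≤ A ω + gfun ω := by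
    intro ω
    haveI hemp := Stmt19.emp_prob hn (fun i => S i ω)
    have hempIcc : empMeasure n (fun i => S i ω) (Icc 0 M) = 1 :=
      Stmt19.emp_Icc hn _ (fun i => hSmem i ω)
    have h1 := Stmt19.W1_le (empMeasure n (fun i => S i ω)) uLaw hM0 hempIcc huIcc
    refine le_trans h1 ?_
    have hcongr : ∫ s in Ico (0:ℝ) M, |cdf (empMeasure n (fun i => S i ω)) s - cdf uLaw s|
        = ∫ s in Ico (0:ℝ) M,
            |(n:ℝ)⁻¹ * ∑ i, (if S i ω ≤ s then (1:ℝ) else 0) - Fu s| := by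
      refine setIntegral_congr_fun measurableSet_Ico (fun s _ => ?_)
      rw [Stmt19.emp_cdf hn _ s, cdf_eq_real, measureReal_def]
    rw [hcongr]
    have int1 : Integrable (fun s => |(n:ℝ)⁻¹ * ∑ i, (if S i ω ≤ s then (1:ℝ) else 0) - Fu s|) ρ := by
      refine Stmt19.integrable_of_bound ρ _ (((hfm _).sub hFum).abs.aestronglyMeasurable) 2 ?_
      intro s
      rw [abs_abs]
      calc |(n:ℝ)⁻¹ * ∑ i, (if S i ω ≤ s then (1:ℝ) else 0) - Fu s| ≤ _ + _ := abs_sub _ _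
      _ ≤ 2 := by have := hfb (fun i => S i ω) s; have := hFu1 s; linarith
    have int2 : Integrable (fun s => |(n:ℝ)⁻¹ * ∑ i, (if S i ω ≤ s then (1:ℝ) else 0)
        - (n:ℝ)⁻¹ * ∑ i, (if Sb i ω ≤ s then (1:ℝ) else 0)|) ρ := by
      refine Stmt19.integrable_of_bound ρ _ (((hfm _).sub (hfm _)).abs.aestronglyMeasurable) 2 ?_
      intro s
      rw [abs_abs]
      calc |(n:ℝ)⁻¹ * ∑ i, (if S i ω ≤ s then (1:ℝ) else 0)
          - (n:ℝ)⁻¹ * ∑ i, (if Sb i ω ≤ s then (1:ℝ) else 0)| ≤ _ + _ := abs_sub _ _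
      _ ≤ 2 := by have := hfb (fun i => S i ω) s; have := hfb (fun i => Sb i ω) s; linarith
    have int3 : Integrable (fun s => |(n:ℝ)⁻¹ * ∑ i, (if Sb i ω ≤ s then (1:ℝ) else 0) - Fu s|) ρ := by
      refine Stmt19.integrable_of_bound ρ _ (((hfm _).sub hFum).abs.aestronglyMeasurable) 2 ?_
      intro s
      rw [abs_abs]
      calc |(n:ℝ)⁻¹ * ∑ i, (if Sb i ω ≤ s then (1:ℝ) else 0) - Fu s| ≤ _ + _ := abs_sub _ _
      _ ≤ 2 := by have := hfb (fun i => Sb i ω) s; have := hFu1 s; linarith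
    have htri : ∫ s in Ico (0:ℝ) M, |(n:ℝ)⁻¹ * ∑ i, (if S i ω ≤ s then (1:ℝ) else 0) - Fu s|
        ≤ (∫ s in Ico (0:ℝ) M, |(n:ℝ)⁻¹ * ∑ i, (if S i ω ≤ s then (1:ℝ) else 0)
            - (n:ℝ)⁻¹ * ∑ i, (if Sb i ω ≤ s then (1:ℝ) else 0)|)
          + ∫ s in Ico (0:ℝ) M, |(n:ℝ)⁻¹ * ∑ i, (if Sb i ω ≤ s then (1:ℝ) else 0) - Fu s| := by
      rw [← integral_add int2 int3]
      exact integral_mono int1 (int2.add int3) (fun s => abs_sub_le _ _ _)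
    refine le_trans htri ?_
    have hterm1 : ∫ s in Ico (0:ℝ) M, |(n:ℝ)⁻¹ * ∑ i, (if S i ω ≤ s then (1:ℝ) else 0)
        - (n:ℝ)⁻¹ * ∑ i, (if Sb i ω ≤ s then (1:ℝ) else 0)| ≤ A ω := by
      have intk : ∀ i : Fin n, Integrable
          (fun s => |(if S i ω ≤ s then (1:ℝ) else 0) - (if Sb i ω ≤ s then (1:ℝ) else 0)|) ρ := by
        intro i
        refine Stmt19.integrable_of_bound ρ _ (((hχm _).sub (hχm _)).abs.aestronglyMeasurable) 2 ?_
        intro s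
        rw [abs_abs]
        calc |(if S i ω ≤ s then (1:ℝ) else 0) - (if Sb i ω ≤ s then (1:ℝ) else 0)|
            ≤ _ + _ := abs_sub _ _
        _ ≤ 2 := by have := hχb (S i ω) s; have := hχb (Sb i ω) s; linarith
      have hptw : ∀ s : ℝ, |(n:ℝ)⁻¹ * ∑ i, (if S i ω ≤ s then (1:ℝ) else 0)
          - (n:ℝ)⁻¹ * ∑ i, (if Sb i ω ≤ s then (1:ℝ) else 0)|
          ≤ (n:ℝ)⁻¹ * ∑ i, |(if S i ω ≤ s then (1:ℝ) else 0) - (if Sb i ω ≤ s then (1:ℝ) else 0)| := by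
        intro s
        rw [← mul_sub, ← Finset.sum_sub_distrib, abs_mul,
          abs_of_nonneg (by positivity : (0:ℝ) ≤ (n:ℝ)⁻¹)]
        exact mul_le_mul_of_nonneg_left (Finset.abs_sum_le_sum_abs _ _) (by positivity)
      have h5 : ∫ s in Ico (0:ℝ) M, ((n:ℝ)⁻¹ *
          ∑ i, |(if S i ω ≤ s then (1:ℝ) else 0) - (if Sb i ω ≤ s then (1:ℝ) else 0)|) = A ω := by
        rw [integral_const_mul, integral_finset_sum _ (fun i _ => intk i), hA]
        congr 1
        refine Finset.sum_congr rfl (fun i _ => ?_)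
        exact Stmt19.ind_abs_eq hM0 (hSmem i ω) (hSbmem i ω)
      rw [← h5]
      refine integral_mono int2 ?_ hptw
      exact ((integrable_finset_sum _ (fun i _ => intk i)).const_mul _)
    have := add_le_add_left hterm1 (∫ s in Ico (0:ℝ) M, |(n:ℝ)⁻¹ *
      ∑ i, (if Sb i ω ≤ s then (1:ℝ) else 0) - Fu s|)
    exact this
  -- integrability of A and gfun
  have habs_bound : ∀ (i : Fin n) (ω : Ω), |S i ω - Sb i ω| ≤ M := by
    intro i ω
    have h1 := hSmem i ω
    have h2 := hSbmem i ω
    rw [abs_le]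
    constructor
    · have := h1.1; have := h2.2; linarith
    · have := h1.2; have := h2.1; linarith
  have hAint : Integrable A P := by
    refine Stmt19.integrable_of_bound P _ ?_ M ?_
    · exact ((Finset.measurable_sum _ (fun i _ =>
        ((hSm i).sub (hSbm i)).abs)).const_mul _).aestronglyMeasurable
    · intro ω
      rw [hA]
      have h0 : (0:ℝ) ≤ (n:ℝ)⁻¹ * ∑ i, |S i ω - Sb i ω| := by positivity
      rw [abs_of_nonneg h0]
      calc (n:ℝ)⁻¹ * ∑ i, |S i ω - Sb i ω| ≤ (n:ℝ)⁻¹ * ∑ _i : Fin n, M :=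
        mul_le_mul_of_nonneg_left (Finset.sum_le_sum (fun i _ => habs_bound i ω)) (by positivity)
      _ = M := by
        simp only [Finset.sum_const, Finset.card_univ, Fintype.card_fin, nsmul_eq_mul]
        rw [← mul_assoc, inv_mul_cancel₀ hnR.ne', one_mul]
  have hJm : Measurable (fun q : Ω × ℝ =>
      |(n:ℝ)⁻¹ * ∑ i, (if Sb i q.1 ≤ q.2 then (1:ℝ) else 0) - Fu q.2|) := by
    refine Measurable.abs (Measurable.sub ?_ (hFum.comp measurable_snd))
    refine Measurable.const_mul ?_ _
    refine Finset.measurable_sum _ (fun i _ => ?_)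
    exact Measurable.ite (measurableSet_le ((hSbm i).comp measurable_fst) measurable_snd)
      measurable_const measurable_const
  have hJint : Integrable (fun q : Ω × ℝ =>
      |(n:ℝ)⁻¹ * ∑ i, (if Sb i q.1 ≤ q.2 then (1:ℝ) else 0) - Fu q.2|) (P.prod ρ) := by
    refine Stmt19.integrable_of_bound _ _ hJm.aestronglyMeasurable 2 ?_
    intro q
    rw [abs_abs]
    calc |(n:ℝ)⁻¹ * ∑ i, (if Sb i q.1 ≤ q.2 then (1:ℝ) else 0) - Fu q.2| ≤ _ + _ := abs_sub _ _
    _ ≤ 2 := by have := hfb (fun i => Sb i q.1) q.2; have := hFu1 q.2; linarith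
  have hgint : Integrable gfun P := hJint.integral_prod_left
  -- swap and bound gfun integral
  have hswap : ∫ ω, gfun ω ∂P = ∫ s in Ico (0:ℝ) M,
      (∫ ω, |(n:ℝ)⁻¹ * ∑ i, (if Sb i ω ≤ s then (1:ℝ) else 0) - Fu s| ∂P) := by
    exact integral_integral_swap hJint
  have hgbound : ∫ ω, gfun ω ∂P ≤ M * (2⁻¹ * (Real.sqrt n)⁻¹) := by
    rw [hswap]
    have hinner : ∀ s : ℝ, ∫ ω, |(n:ℝ)⁻¹ *
        ∑ i, (if Sb i ω ≤ s then (1:ℝ) else 0) - Fu s| ∂P ≤ 2⁻¹ * (Real.sqrt n)⁻¹ :=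
      fun s => Stmt19.prob_bound P hn Sb hSbm hindep uLaw hmap s
    calc ∫ s in Ico (0:ℝ) M,
        (∫ ω, |(n:ℝ)⁻¹ * ∑ i, (if Sb i ω ≤ s then (1:ℝ) else 0) - Fu s| ∂P)
        ≤ ∫ _s in Ico (0:ℝ) M, (2⁻¹ * (Real.sqrt n)⁻¹) := by
          refine integral_mono hJint.integral_prod_right (integrable_const _) (fun s => hinner s)
    _ = M * (2⁻¹ * (Real.sqrt n)⁻¹) := by
          rw [setIntegral_const, measureReal_def, Real.volume_Ico, sub_zero, ENNReal.toReal_ofReal hM0,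
            smul_eq_mul]
  -- bound A integral
  have hAbound : ∫ ω, A ω ∂P ≤ C * (Real.sqrt n)⁻¹ := by
    have hint_i : ∀ i : Fin n, Integrable (fun ω => |S i ω - Sb i ω|) P := by
      intro i
      refine Stmt19.integrable_of_bound P _ ((hSm i).sub (hSbm i)).abs.aestronglyMeasurable M ?_
      intro ω
      rw [abs_abs]
      exact habs_bound i ω
    have h6 : ∫ ω, A ω ∂P = (n:ℝ)⁻¹ * ∑ i, ∫ ω, |S i ω - Sb i ω| ∂P := by
      rw [hA]
      rw [integral_const_mul, integral_finset_sum _ (fun i _ => hint_i i)]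
    rw [h6]
    calc (n:ℝ)⁻¹ * ∑ i, ∫ ω, |S i ω - Sb i ω| ∂P
        ≤ (n:ℝ)⁻¹ * ∑ _i : Fin n, (C * (Real.sqrt n)⁻¹) :=
          mul_le_mul_of_nonneg_left (Finset.sum_le_sum (fun i _ => hL1 i)) (by positivity)
    _ = C * (Real.sqrt n)⁻¹ := by
          simp only [Finset.sum_const, Finset.card_univ, Fintype.card_fin, nsmul_eq_mul]
          rw [← mul_assoc, inv_mul_cancel₀ hnR.ne', one_mul]
  -- conclude
  calc ∫ ω, W1 (empMeasure n (fun i => S i ω)) uLaw ∂P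
      ≤ ∫ ω, (A ω + gfun ω) ∂P := integral_mono hInt (hAint.add hgint) hkey
  _ = (∫ ω, A ω ∂P) + ∫ ω, gfun ω ∂P := integral_add hAint hgint
  _ ≤ C * (Real.sqrt n)⁻¹ + M * (2⁻¹ * (Real.sqrt n)⁻¹) := add_le_add hAbound hgbound
  _ = (C + M / 2) * (Real.sqrt n)⁻¹ := by ring
end
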